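/- arXiv:0902.4373 — 3 statements merged into one kernel-verified Lean document; each statement's English description precedes it below -/
import Mathlib

section
/- Let K ⊂ L²(0,1) be the closed convex cone of nondecreasing functions. Then the projection Proj_K is a contraction with respect to every L^p norm, 1 ≤ p ≤ ∞: ‖Proj_K(f) - Proj_K(h)‖_{L^p(0,1)} ≤ ‖f - h‖_{L^p(0,1)} whenever f, h ∈ L²(0,1) ∩ L^p(0,1). -/
open MeasureTheory Set Filter

noncomputable section

/-- Lebesgue measure restricted to the interval (0,1). -/
def μ01 : MeasureTheory.Measure ℝ := MeasureTheory.volume.restrict (Set.Ioo 0 1)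

/-- The convex cone `K` of (essentially) nondecreasing functions in L²(0,1). -/
def coneK : Set (ℝ → ℝ) := {g | MonotoneOn g (Set.Ioo 0 1) ∧ MeasureTheory.MemLp g 2 μ01}

/-- `g` is the L²(0,1)-orthogonal projection of `f` onto the cone `K`,
characterized by the variational inequality `⟨f - g, z - g⟩ ≤ 0` for all `z ∈ K`. -/
def IsProjK (f g : ℝ → ℝ) : Prop :=
  g ∈ coneK ∧ ∀ z ∈ coneK, (∫ w in Set.Ioo (0:ℝ) 1, (f w - g w) * (z w - g w)) ≤ 0

/-- The convex envelope of `F` on `[0,1]`: the supremum of affine functions below `F` there. -/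
def convEnv (F : ℝ → ℝ) (w : ℝ) : ℝ :=
  sSup {y | ∃ a b : ℝ, y = a + b * w ∧ ∀ v ∈ Set.Icc (0:ℝ) 1, a + b * v ≤ F v}

/-- The open set `Ω_g ⊆ (0,1)` of points near which `g` is essentially constant. -/
def locConstSet (g : ℝ → ℝ) : Set ℝ :=
  {w | w ∈ Set.Ioo (0:ℝ) 1 ∧ ∃ a b c : ℝ, a < w ∧ w < b ∧
    ∀ᵐ x ∂μ01, x ∈ Set.Ioo a b → g x = c}

/-- The closed subspace `H_g` of L²(0,1) functions essentially constant on each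
open interval contained in `Ω_g`. -/
def Hspace (g : ℝ → ℝ) : Set (ℝ → ℝ) :=
  {u | MeasureTheory.MemLp u 2 μ01 ∧ ∀ a b : ℝ, Set.Ioo a b ⊆ locConstSet g →
    ∃ c : ℝ, ∀ᵐ x ∂μ01, x ∈ Set.Ioo a b → u x = c}

/-- `ξ` belongs to the subdifferential `∂I_K(g)` of the indicator function of `K` at `g ∈ K`. -/
def subdiffIK (g ξ : ℝ → ℝ) : Prop :=
  g ∈ coneK ∧ ∀ z ∈ coneK, (∫ w in Set.Ioo (0:ℝ) 1, ξ w * (z w - g w)) ≤ 0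

lemma med1 (a b τ s : ℝ) (hs : 0 < s) :
    min a (max (b + τ) (a - s)) - a = -(min (max (a - b - τ) 0) s) := by
  rcases le_total (a - b) τ with h | h
  · rw [max_eq_right (by linarith : a - b - τ ≤ 0)]
    rw [min_eq_left hs.le, max_eq_left (by linarith : a - s ≤ b + τ),
      min_eq_left (by linarith : a ≤ b + τ)]
    ring
  · rw [max_eq_left (by linarith : (0:ℝ) ≤ a - b - τ)]
    rcases le_total (a - b - τ) s with h2 | h2
    · rw [min_eq_left h2, max_eq_left (by linarith), min_eq_right (by linarith)]
      ring
    · rw [min_eq_right h2, max_eq_right (by linarith), min_eq_right (by linarith)]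
      ring

lemma med2 (a b τ s : ℝ) (hs : 0 < s) :
    max b (min (a - τ) (b + s)) - b = min (max (a - b - τ) 0) s := by
  rcases le_total (a - b) τ with h | h
  · rw [max_eq_right (by linarith : a - b - τ ≤ 0), min_eq_left hs.le,
      min_eq_left (by linarith : a - τ ≤ b + s), max_eq_left (by linarith : a - τ ≤ b)]
    ring
  · rw [max_eq_left (by linarith : (0:ℝ) ≤ a - b - τ)]
    rcases le_total (a - b - τ) s with h2 | h2
    · rw [min_eq_left h2, min_eq_left (by linarith), max_eq_right (by linarith)]
      ring
    · rw [min_eq_right h2, min_eq_right (by linarith), max_eq_right (by linarith)]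
      ring

instance : IsFiniteMeasure μ01 := by
  constructor
  unfold μ01
  rw [Measure.restrict_apply_univ]
  simp

lemma int_mul_L2 {μ : Measure ℝ} {f g : ℝ → ℝ} (hf : MemLp f 2 μ) (hg : MemLp g 2 μ) :
    Integrable (fun x => f x * g x) μ := by
  refine Integrable.mono' (((hf.integrable_sq).add (hg.integrable_sq)).const_mul (1/2))
    (hf.1.mul hg.1) (Eventually.of_forall fun x => ?_)
  have : ‖f x * g x‖ = |f x * g x| := rfl
  rw [this, abs_mul]
  show |f x| * |g x| ≤ 1/2 * ((fun y => f y ^ 2) + fun y => g y ^ 2) x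
  simp only [Pi.add_apply]
  nlinarith [abs_nonneg (f x), abs_nonneg (g x), sq_abs (f x), sq_abs (g x),
    sq_nonneg (|f x| - |g x|)]

lemma step1 (f h g₁ g₂ : ℝ → ℝ)
    (hf : MemLp f 2 μ01) (hh : MemLp h 2 μ01)
    (h₁ : IsProjK f g₁) (h₂ : IsProjK h g₂) (τ s : ℝ) (hτ : 0 ≤ τ) (hs : 0 < s) :
    0 ≤ ∫ x, ((f x - h x) - (g₁ x - g₂ x)) * min (max (g₁ x - g₂ x - τ) 0) s ∂μ01 := by
  obtain ⟨⟨hm₁, hg₁⟩, hVI₁⟩ := h₁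
  obtain ⟨⟨hm₂, hg₂⟩, hVI₂⟩ := h₂
  set w : ℝ → ℝ := fun x => min (max (g₁ x - g₂ x - τ) 0) s with hw
  have hwmem : MemLp w 2 μ01 := (((hg₁.sub hg₂).sub (memLp_const τ)).sup
    (memLp_const 0)).inf (memLp_const s)
  have hmono' : MonotoneOn (fun x => g₁ x - τ) (Set.Ioo (0:ℝ) 1) :=
    fun x hx y hy hxy => by simpa using sub_le_sub_right (hm₁ hx hy hxy) τ
  have hmono'' : MonotoneOn (fun x => g₁ x - s) (Set.Ioo (0:ℝ) 1) :=
    fun x hx y hy hxy => by simpa using sub_le_sub_right (hm₁ hx hy hxy) s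
  have hz₁ : (fun x => min (g₁ x) (max (g₂ x + τ) (g₁ x - s))) ∈ coneK := by
    constructor
    · exact hm₁.min ((hm₂.add_const τ).max hmono'')
    · exact hg₁.inf ((hg₂.add (memLp_const τ)).sup (hg₁.sub (memLp_const s)))
  have hz₂ : (fun x => max (g₂ x) (min (g₁ x - τ) (g₂ x + s))) ∈ coneK := by
    constructor
    · exact hm₂.max (hmono'.min (hm₂.add_const s))
    · exact hg₂.sup ((hg₁.sub (memLp_const τ)).inf (hg₂.add (memLp_const s)))
  have VI₁ := hVI₁ _ hz₁
  have VI₂ := hVI₂ _ hz₂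
  have VI₁' : 0 ≤ ∫ x, (f x - g₁ x) * w x ∂μ01 := by
    have e : ∫ x in Set.Ioo (0:ℝ) 1,
        (f x - g₁ x) * ((fun y => min (g₁ y) (max (g₂ y + τ) (g₁ y - s))) x - g₁ x)
        = -∫ x, (f x - g₁ x) * w x ∂μ01 := by
      rw [← integral_neg]
      unfold μ01
      refine integral_congr_ae (Eventually.of_forall fun x => ?_)
      show (f x - g₁ x) * (min (g₁ x) (max (g₂ x + τ) (g₁ x - s)) - g₁ x) = _
      rw [med1 (g₁ x) (g₂ x) τ s hs]
      show _ = -((f x - g₁ x) * min (max (g₁ x - g₂ x - τ) 0) s)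
      ring
    rw [e] at VI₁
    linarith
  have VI₂' : ∫ x, (h x - g₂ x) * w x ∂μ01 ≤ 0 := by
    have e : ∫ x in Set.Ioo (0:ℝ) 1,
        (h x - g₂ x) * ((fun y => max (g₂ y) (min (g₁ y - τ) (g₂ y + s))) x - g₂ x)
        = ∫ x, (h x - g₂ x) * w x ∂μ01 := by
      unfold μ01
      refine integral_congr_ae (Eventually.of_forall fun x => ?_)
      show (h x - g₂ x) * (max (g₂ x) (min (g₁ x - τ) (g₂ x + s)) - g₂ x) = _
      rw [med2 (g₁ x) (g₂ x) τ s hs]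
    rw [e] at VI₂
    exact VI₂
  have intf : Integrable (fun x => (f x - g₁ x) * w x) μ01 := int_mul_L2 (hf.sub hg₁) hwmem
  have inth : Integrable (fun x => (h x - g₂ x) * w x) μ01 := int_mul_L2 (hh.sub hg₂) hwmem
  have e3 : ∫ x, ((f x - h x) - (g₁ x - g₂ x)) * w x ∂μ01
      = (∫ x, (f x - g₁ x) * w x ∂μ01) - ∫ x, (h x - g₂ x) * w x ∂μ01 := by
    rw [← integral_sub intf inth]
    exact integral_congr_ae (Eventually.of_forall fun x => by ring)
  show 0 ≤ ∫ x, ((f x - h x) - (g₁ x - g₂ x)) * w x ∂μ01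
  rw [e3]
  linarith

lemma keyIneq (f h g₁ g₂ : ℝ → ℝ)
    (hf : MemLp f 2 μ01) (hh : MemLp h 2 μ01)
    (h₁ : IsProjK f g₁) (h₂ : IsProjK h g₂) (τ : ℝ) (hτ : 0 ≤ τ) :
    ∫ x, max (g₁ x - g₂ x - τ) 0 ∂μ01 ≤ ∫ x, max (f x - h x - τ) 0 ∂μ01 := by
  have hg₁ : MemLp g₁ 2 μ01 := h₁.1.2
  have hg₂ : MemLp g₂ 2 μ01 := h₂.1.2
  set d : ℝ → ℝ := fun x => g₁ x - g₂ x with hd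
  set u : ℝ → ℝ := fun x => f x - h x with hu
  have hd2 : MemLp d 2 μ01 := hg₁.sub hg₂
  have hu2 : MemLp u 2 μ01 := hf.sub hh
  set χ : ℝ → ℝ := fun x => if τ < d x then (1:ℝ) else 0 with hχ
  have hχmeas : AEStronglyMeasurable χ μ01 := by
    have hφ : Measurable fun t : ℝ => Set.indicator (Set.Ioi τ) (fun _ => (1:ℝ)) t :=
      measurable_const.indicator measurableSet_Ioi
    have : AEMeasurable (fun x => Set.indicator (Set.Ioi τ) (fun _ => (1:ℝ)) (d x)) μ01 :=
      hφ.comp_aemeasurable hd2.aestronglyMeasurable.aemeasurable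
    refine this.aestronglyMeasurable.congr (Eventually.of_forall fun x => ?_)
    by_cases hx : τ < d x <;> simp [hχ, hx, Set.indicator, Set.mem_Ioi]
  have hχ01 : ∀ x, 0 ≤ χ x ∧ χ x ≤ 1 := by
    intro x; by_cases hx : τ < d x <;> simp [hχ, hx]
  -- dominated convergence to show 0 ≤ ∫ (u - d) χ
  have key : 0 ≤ ∫ x, (u x - d x) * χ x ∂μ01 := by
    set F : ℕ → ℝ → ℝ := fun n x =>
      (u x - d x) * (((n:ℝ)+1) * min (max (d x - τ) 0) (((n:ℝ)+1)⁻¹)) with hF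
    have hnpos : ∀ n : ℕ, (0:ℝ) < (n:ℝ)+1 := fun n => by positivity
    have hFc01 : ∀ (n : ℕ) (x : ℝ), 0 ≤ ((n:ℝ)+1) * min (max (d x - τ) 0) (((n:ℝ)+1)⁻¹) ∧
        ((n:ℝ)+1) * min (max (d x - τ) 0) (((n:ℝ)+1)⁻¹) ≤ 1 := by
      intro n x
      constructor
      · exact mul_nonneg (hnpos n).le (le_min (le_max_right _ _) (by positivity))
      · calc ((n:ℝ)+1) * min (max (d x - τ) 0) (((n:ℝ)+1)⁻¹)
            ≤ ((n:ℝ)+1) * ((n:ℝ)+1)⁻¹ := by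
              exact mul_le_mul_of_nonneg_left (min_le_right _ _) (hnpos n).le
          _ = 1 := mul_inv_cancel₀ (hnpos n).ne'
    have hint : ∀ n, Integrable (F n) μ01 := by
      intro n
      exact int_mul_L2 (hu2.sub hd2)
        (((((hd2.sub (memLp_const τ)).sup (memLp_const 0)).inf
          (memLp_const (((n:ℝ)+1)⁻¹))).const_mul ((n:ℝ)+1)))
    have hbound : ∀ n, ∀ᵐ x ∂μ01, ‖F n x‖ ≤ |u x - d x| := by
      intro n
      refine Eventually.of_forall fun x => ?_
      have := hFc01 n x
      rw [hF]
      show |(u x - d x) * _| ≤ _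
      rw [abs_mul]
      calc |u x - d x| * |((n:ℝ)+1) * min (max (d x - τ) 0) (((n:ℝ)+1)⁻¹)|
          ≤ |u x - d x| * 1 := by
            refine mul_le_mul_of_nonneg_left ?_ (abs_nonneg _)
            rw [abs_of_nonneg this.1]; exact this.2
        _ = |u x - d x| := mul_one _
    have htend : ∀ᵐ x ∂μ01, Tendsto (fun n => F n x) atTop (nhds ((u x - d x) * χ x)) := by
      refine Eventually.of_forall fun x => ?_
      by_cases hx : τ < d x
      · have hχx : χ x = 1 := by simp [hχ, hx]
        rw [hχx, mul_one]
        obtain ⟨N, hN⟩ := exists_nat_gt (d x - τ)⁻¹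
        refine tendsto_const_nhds.congr' ?_
        filter_upwards [eventually_ge_atTop N] with n hn
        have hpos : 0 < d x - τ := by linarith
        have hle : (((n:ℝ)+1))⁻¹ ≤ d x - τ := by
          rw [inv_le_comm₀ (hnpos n) hpos]
          calc (d x - τ)⁻¹ ≤ (N:ℝ) := hN.le
            _ ≤ (n:ℝ)+1 := by exact_mod_cast Nat.le_succ_of_le hn
        show u x - d x = (u x - d x) * (((n:ℝ)+1) * min (max (d x - τ) 0) (((n:ℝ)+1)⁻¹))
        rw [max_eq_left hpos.le, min_eq_right hle, mul_inv_cancel₀ (hnpos n).ne', mul_one]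
      · have hχx : χ x = 0 := by simp [hχ, hx]
        rw [hχx, mul_zero]
        have : ∀ n, F n x = 0 := by
          intro n
          rw [hF]
          show (u x - d x) * (((n:ℝ)+1) * min (max (d x - τ) 0) (((n:ℝ)+1)⁻¹)) = 0
          rw [max_eq_right (by push_neg at hx; linarith), min_eq_left (by positivity),
            mul_zero, mul_zero]
        simpa [this] using tendsto_const_nhds
    have hlim := tendsto_integral_of_dominated_convergence _ (fun n => (hint n).1)
      (((hu2.sub hd2).integrable one_le_two).abs) hbound htend
    refine ge_of_tendsto' hlim fun n => ?_
    have : ∫ x, F n x ∂μ01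
        = ((n:ℝ)+1) * ∫ x, (u x - d x) * min (max (d x - τ) 0) (((n:ℝ)+1)⁻¹) ∂μ01 := by
      rw [← integral_const_mul]
      exact integral_congr_ae (Eventually.of_forall fun x => by rw [hF]; ring)
    rw [this]
    exact mul_nonneg (hnpos n).le (step1 f h g₁ g₂ hf hh h₁ h₂ τ _ hτ (by positivity))
  -- conclude
  have eq1 : ∀ x, max (d x - τ) 0 = (d x - τ) * χ x := by
    intro x
    by_cases hx : τ < d x
    · simp [hχ, hx, max_eq_left (by linarith : (0:ℝ) ≤ d x - τ)]
    · push_neg at hx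
      simp [hχ, not_lt.mpr hx, max_eq_right (by linarith : d x - τ ≤ 0)]
  have int_maxd : Integrable (fun x => max (d x - τ) 0) μ01 :=
    (((hd2.sub (memLp_const τ)).sup (memLp_const 0)).integrable one_le_two)
  have int_dχ : Integrable (fun x => (d x - τ) * χ x) μ01 :=
    int_maxd.congr (Eventually.of_forall eq1)
  have int_uτ : Integrable (fun x => u x - τ) μ01 :=
    ((hu2.sub (memLp_const τ)).integrable one_le_two)
  have int_uχ : Integrable (fun x => (u x - τ) * χ x) μ01 := by
    refine (int_uτ.bdd_mul (c := 1) hχmeas (Eventually.of_forall fun x => ?_)).congr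
      (Eventually.of_forall fun x => mul_comm _ _)
    have := hχ01 x
    rw [Real.norm_eq_abs, abs_of_nonneg this.1]; exact this.2
  have int_udχ : Integrable (fun x => (u x - d x) * χ x) μ01 := by
    refine (int_uχ.sub int_dχ).congr (Eventually.of_forall fun x => ?_)
    show (u x - τ) * χ x - (d x - τ) * χ x = _
    ring
  have step : ∫ x, (d x - τ) * χ x ∂μ01 ≤ ∫ x, (u x - τ) * χ x ∂μ01 := by
    have e : ∫ x, (u x - τ) * χ x ∂μ01 - ∫ x, (d x - τ) * χ x ∂μ01
        = ∫ x, (u x - d x) * χ x ∂μ01 := by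
      rw [← integral_sub int_uχ int_dχ]
      exact integral_congr_ae (Eventually.of_forall fun x => by ring)
    linarith [key, e.ge, e.le]
  have int_maxu : Integrable (fun x => max (u x - τ) 0) μ01 :=
    (((hu2.sub (memLp_const τ)).sup (memLp_const 0)).integrable one_le_two)
  have step2 : ∫ x, (u x - τ) * χ x ∂μ01 ≤ ∫ x, max (u x - τ) 0 ∂μ01 := by
    refine integral_mono int_uχ int_maxu fun x => ?_
    by_cases hx : τ < d x
    · simp only [hχ, if_pos hx, mul_one]
      exact le_max_left _ _
    · simp only [hχ, if_neg hx, mul_zero]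
      exact le_max_right _ _
  calc ∫ x, max (d x - τ) 0 ∂μ01 = ∫ x, (d x - τ) * χ x ∂μ01 :=
        integral_congr_ae (Eventually.of_forall eq1)
    _ ≤ ∫ x, (u x - τ) * χ x ∂μ01 := step
    _ ≤ ∫ x, max (u x - τ) 0 ∂μ01 := step2

lemma layerId (r : ℝ) (hr : 1 < r) (y : ℝ) :
    ∫⁻ τ in Set.Ioi (0:ℝ), ENNReal.ofReal (τ ^ (r-2) * max (y - τ) 0) ∂(volume : Measure ℝ)
      = ENNReal.ofReal (max y 0 ^ r / (r * (r-1))) := by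
  rcases le_or_gt y 0 with hy | hy
  · have hz : ∀ᵐ τ ∂(volume : Measure ℝ), τ ∈ Set.Ioi (0:ℝ) →
        ENNReal.ofReal (τ ^ (r-2) * max (y - τ) 0) = 0 := by
      refine Eventually.of_forall fun τ hτ => ?_
      rw [max_eq_right (by linarith [mem_Ioi.mp hτ] : y - τ ≤ 0), mul_zero, ENNReal.ofReal_zero]
    rw [setLIntegral_congr_fun_ae measurableSet_Ioi hz, lintegral_zero,
      max_eq_right hy, Real.zero_rpow (by linarith : r ≠ 0), zero_div, ENNReal.ofReal_zero]
  · have hm : Measurable fun τ : ℝ => τ ^ (r-2) * max (y - τ) 0 := by fun_prop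
    have hrpow : IntegrableOn (fun τ : ℝ => τ ^ (r-2)) (Set.Ioc 0 y) := by
      have := intervalIntegral.intervalIntegrable_rpow' (a:=0) (b:=y) (by linarith : (-1:ℝ) < r-2)
      rwa [intervalIntegrable_iff_integrableOn_Ioc_of_le hy.le] at this
    have hint1 : IntegrableOn (fun τ : ℝ => τ ^ (r-2) * max (y - τ) 0) (Set.Ioc 0 y) := by
      refine Integrable.mono' (hrpow.mul_const y) hm.aestronglyMeasurable.restrict ?_
      rw [ae_restrict_iff' measurableSet_Ioc]
      refine Eventually.of_forall fun τ hτ => ?_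
      rw [Real.norm_eq_abs, abs_mul, abs_of_nonneg (Real.rpow_nonneg hτ.1.le _),
        abs_of_nonneg (le_max_right (y - τ) 0)]
      exact mul_le_mul_of_nonneg_left (max_le (by linarith [hτ.1]) hy.le)
        (Real.rpow_nonneg hτ.1.le _)
    have hint2 : IntegrableOn (fun τ : ℝ => τ ^ (r-2) * max (y - τ) 0) (Set.Ioi y) := by
      refine (integrable_zero _ _ _).congr ?_
      rw [EventuallyEq, ae_restrict_iff' measurableSet_Ioi]
      refine Eventually.of_forall fun τ hτ => ?_
      rw [max_eq_right (by linarith [mem_Ioi.mp hτ] : y - τ ≤ 0), mul_zero]; rfl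
    have hunion : Set.Ioc (0:ℝ) y ∪ Set.Ioi y = Set.Ioi 0 := Set.Ioc_union_Ioi_eq_Ioi hy.le
    have hIoi : IntegrableOn (fun τ : ℝ => τ ^ (r-2) * max (y - τ) 0) (Set.Ioi 0) := by
      rw [← hunion]; exact hint1.union hint2
    have hnn : 0 ≤ᶠ[ae (volume.restrict (Set.Ioi (0:ℝ)))]
        fun τ : ℝ => τ ^ (r-2) * max (y - τ) 0 := by
      rw [EventuallyLE, ae_restrict_iff' measurableSet_Ioi]
      refine Eventually.of_forall fun τ hτ => ?_
      exact mul_nonneg (Real.rpow_nonneg (le_of_lt hτ) _) (le_max_right _ _)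
    rw [← ofReal_integral_eq_lintegral_ofReal hIoi hnn]
    congr 1
    rw [← hunion, setIntegral_union (Set.Ioc_disjoint_Ioi le_rfl) measurableSet_Ioi hint1 hint2]
    have e2 : ∫ τ in Set.Ioi y, τ ^ (r-2) * max (y - τ) 0 = 0 := by
      rw [setIntegral_congr_fun measurableSet_Ioi (fun τ hτ => by
        rw [max_eq_right (by linarith [mem_Ioi.mp hτ] : y - τ ≤ 0), mul_zero]), integral_zero]
    have e1 : ∫ τ in Set.Ioc (0:ℝ) y, τ ^ (r-2) * max (y - τ) 0
        = ∫ τ in Set.Ioc (0:ℝ) y, (y * τ ^ (r-2) - τ ^ (r-1)) := by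
      refine setIntegral_congr_fun measurableSet_Ioc fun τ hτ => ?_
      have hτp : 0 < τ := hτ.1
      have : τ ^ (r-2) * τ = τ ^ (r-1) := by
        rw [show r-1 = (r-2)+1 by ring, Real.rpow_add hτp, Real.rpow_one]
      rw [max_eq_left (by linarith [hτ.2] : (0:ℝ) ≤ y - τ)]
      nlinarith [this]
    rw [e1, e2, add_zero, ← intervalIntegral.integral_of_le hy.le]
    have i1 : IntervalIntegrable (fun τ : ℝ => y * τ ^ (r-2)) volume 0 y :=
      (intervalIntegral.intervalIntegrable_rpow' (by linarith : (-1:ℝ) < r-2)).const_mul y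
    have i2 : IntervalIntegrable (fun τ : ℝ => τ ^ (r-1)) volume 0 y :=
      intervalIntegral.intervalIntegrable_rpow' (by linarith : (-1:ℝ) < r-1)
    rw [intervalIntegral.integral_sub i1 i2, intervalIntegral.integral_const_mul,
      integral_rpow (Or.inl (by linarith : (-1:ℝ) < r-2)),
      integral_rpow (Or.inl (by linarith : (-1:ℝ) < r-1))]
    rw [Real.zero_rpow (by intro hc; nlinarith : r-2+1 ≠ 0),
      Real.zero_rpow (by intro hc; nlinarith : r-1+1 ≠ 0)]
    rw [max_eq_left hy.le, sub_zero, sub_zero, show r-2+1 = r-1 by ring,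
      show r-1+1 = r by ring]
    have e5 : y * y ^ (r-1) = y ^ r := by
      have h2 := Real.rpow_add hy 1 (r-1)
      rw [Real.rpow_one, show 1+(r-1) = r by ring] at h2
      exact h2.symm
    have hr0 : r ≠ 0 := by linarith
    have hr1 : r - 1 ≠ 0 := sub_ne_zero.mpr (by linarith)
    field_simp
    linear_combination r * e5

lemma posPartLe (d u : ℝ → ℝ) (hdm : Measurable d) (hum : Measurable u)
    (hd2 : MemLp d 2 μ01) (hu2 : MemLp u 2 μ01)
    (key : ∀ τ : ℝ, 0 ≤ τ → ∫ x, max (d x - τ) 0 ∂μ01 ≤ ∫ x, max (u x - τ) 0 ∂μ01)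
    (r : ℝ) (hr : 1 ≤ r) :
    ∫⁻ x, ENNReal.ofReal (max (d x) 0) ^ r ∂μ01
      ≤ ∫⁻ x, ENNReal.ofReal (max (u x) 0) ^ r ∂μ01 := by
  have ltau : ∀ τ : ℝ, 0 ≤ τ → ∫⁻ x, ENNReal.ofReal (max (d x - τ) 0) ∂μ01
      ≤ ∫⁻ x, ENNReal.ofReal (max (u x - τ) 0) ∂μ01 := by
    intro τ hτ
    have intd : Integrable (fun x => max (d x - τ) 0) μ01 :=
      ((hd2.sub (memLp_const τ)).sup (memLp_const 0)).integrable one_le_two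
    have intu : Integrable (fun x => max (u x - τ) 0) μ01 :=
      ((hu2.sub (memLp_const τ)).sup (memLp_const 0)).integrable one_le_two
    rw [← ofReal_integral_eq_lintegral_ofReal intd
        (Eventually.of_forall fun x => le_max_right _ _),
      ← ofReal_integral_eq_lintegral_ofReal intu
        (Eventually.of_forall fun x => le_max_right _ _)]
    exact ENNReal.ofReal_le_ofReal (key τ hτ)
  rcases eq_or_lt_of_le hr with he | hlt
  · have h0 := ltau 0 le_rfl
    simp only [sub_zero] at h0
    simp only [← he, ENNReal.rpow_one]
    exact h0
  · set c : ENNReal := ENNReal.ofReal (r*(r-1)) with hc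
    have hcpos : (0:ℝ) < r*(r-1) := by nlinarith
    have layer : ∀ g : ℝ → ℝ, ∀ x : ℝ, ENNReal.ofReal (max (g x) 0) ^ r
        = c * ∫⁻ τ in Set.Ioi (0:ℝ), ENNReal.ofReal (τ^(r-2) * max (g x - τ) 0) ∂volume := by
      intro g x
      rw [layerId r hlt (g x), hc, ← ENNReal.ofReal_mul hcpos.le, mul_comm (r*(r-1)),
        div_mul_cancel₀ _ hcpos.ne', ENNReal.ofReal_rpow_of_nonneg (le_max_right _ _)
          (by linarith : (0:ℝ) ≤ r)]
    have swap : ∀ g : ℝ → ℝ, Measurable g →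
        ∫⁻ x, ∫⁻ τ in Set.Ioi (0:ℝ), ENNReal.ofReal (τ^(r-2) * max (g x - τ) 0) ∂volume ∂μ01
        = ∫⁻ τ in Set.Ioi (0:ℝ), ∫⁻ x, ENNReal.ofReal (τ^(r-2) * max (g x - τ) 0) ∂μ01 ∂volume := by
      intro g hg
      refine lintegral_lintegral_swap ?_
      have : Measurable fun p : ℝ × ℝ =>
          ENNReal.ofReal (p.2 ^ (r-2) * max (g p.1 - p.2) 0) := by fun_prop
      exact this.aemeasurable
    calc ∫⁻ x, ENNReal.ofReal (max (d x) 0) ^ r ∂μ01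
        = c * ∫⁻ x, ∫⁻ τ in Set.Ioi (0:ℝ),
            ENNReal.ofReal (τ^(r-2) * max (d x - τ) 0) ∂volume ∂μ01 := by
          rw [← lintegral_const_mul' c _ ENNReal.ofReal_ne_top]
          exact lintegral_congr (layer d)
      _ = c * ∫⁻ τ in Set.Ioi (0:ℝ), ∫⁻ x,
            ENNReal.ofReal (τ^(r-2) * max (d x - τ) 0) ∂μ01 ∂volume := by rw [swap d hdm]
      _ ≤ c * ∫⁻ τ in Set.Ioi (0:ℝ), ∫⁻ x,
            ENNReal.ofReal (τ^(r-2) * max (u x - τ) 0) ∂μ01 ∂volume := by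
          refine mul_le_mul_right ?_ c
          refine lintegral_mono_ae ?_
          rw [ae_restrict_iff' measurableSet_Ioi]
          refine Eventually.of_forall fun τ hτ => ?_
          have hτpos : (0:ℝ) < τ := hτ
          have ed : ∀ x:ℝ, ENNReal.ofReal (τ^(r-2) * max (d x - τ) 0)
              = ENNReal.ofReal (τ^(r-2)) * ENNReal.ofReal (max (d x - τ) 0) :=
            fun x => ENNReal.ofReal_mul (Real.rpow_nonneg hτpos.le _)
          have eu : ∀ x:ℝ, ENNReal.ofReal (τ^(r-2) * max (u x - τ) 0)
              = ENNReal.ofReal (τ^(r-2)) * ENNReal.ofReal (max (u x - τ) 0) :=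
            fun x => ENNReal.ofReal_mul (Real.rpow_nonneg hτpos.le _)
          rw [lintegral_congr ed, lintegral_congr eu,
            lintegral_const_mul' _ _ ENNReal.ofReal_ne_top,
            lintegral_const_mul' _ _ ENNReal.ofReal_ne_top]
          exact mul_le_mul_right (ltau τ hτpos.le) _
      _ = c * ∫⁻ x, ∫⁻ τ in Set.Ioi (0:ℝ),
            ENNReal.ofReal (τ^(r-2) * max (u x - τ) 0) ∂volume ∂μ01 := by rw [swap u hum]
      _ = ∫⁻ x, ENNReal.ofReal (max (u x) 0) ^ r ∂μ01 := by
          rw [← lintegral_const_mul' c _ ENNReal.ofReal_ne_top]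
          exact (lintegral_congr (layer u)).symm

theorem stmt5 (f h g₁ g₂ : ℝ → ℝ) (p : ENNReal) (hp : 1 ≤ p)
    (hf : MeasureTheory.MemLp f 2 μ01) (hh : MeasureTheory.MemLp h 2 μ01)
    (hfp : MeasureTheory.MemLp f p μ01) (hhp : MeasureTheory.MemLp h p μ01)
    (h₁ : IsProjK f g₁) (h₂ : IsProjK h g₂) :
    MeasureTheory.eLpNorm (fun w => g₁ w - g₂ w) p μ01 ≤
      MeasureTheory.eLpNorm (fun w => f w - h w) p μ01 := by
  have hg₁2 : MemLp g₁ 2 μ01 := h₁.1.2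
  have hg₂2 : MemLp g₂ 2 μ01 := h₂.1.2
  have hd2 : MemLp (fun x => g₁ x - g₂ x) 2 μ01 := hg₁2.sub hg₂2
  have hu2 : MemLp (fun x => f x - h x) 2 μ01 := hf.sub hh
  have keyA := keyIneq f h g₁ g₂ hf hh h₁ h₂
  have keyB := keyIneq h f g₂ g₁ hh hf h₂ h₁
  -- measurable representatives
  obtain ⟨d₀, hd₀sm, hdd₀⟩ := hd2.aestronglyMeasurable
  obtain ⟨u₀, hu₀sm, huu₀⟩ := hu2.aestronglyMeasurable
  have hd₀m : Measurable d₀ := hd₀sm.measurable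
  have hu₀m : Measurable u₀ := hu₀sm.measurable
  have hd₀2 : MemLp d₀ 2 μ01 := (memLp_congr_ae hdd₀).mp hd2
  have hu₀2 : MemLp u₀ 2 μ01 := (memLp_congr_ae huu₀).mp hu2
  have keyA' : ∀ τ : ℝ, 0 ≤ τ →
      ∫ x, max (d₀ x - τ) 0 ∂μ01 ≤ ∫ x, max (u₀ x - τ) 0 ∂μ01 := by
    intro τ hτ
    have e1 : ∫ x, max (d₀ x - τ) 0 ∂μ01 = ∫ x, max (g₁ x - g₂ x - τ) 0 ∂μ01 :=
      integral_congr_ae (hdd₀.mono fun x hx => by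
        show max (d₀ x - τ) 0 = max (g₁ x - g₂ x - τ) 0
        rw [show g₁ x - g₂ x = d₀ x from hx])
    have e2 : ∫ x, max (u₀ x - τ) 0 ∂μ01 = ∫ x, max (f x - h x - τ) 0 ∂μ01 :=
      integral_congr_ae (huu₀.mono fun x hx => by
        show max (u₀ x - τ) 0 = max (f x - h x - τ) 0
        rw [show f x - h x = u₀ x from hx])
    rw [e1, e2]; exact keyA τ hτ
  have keyB' : ∀ τ : ℝ, 0 ≤ τ →
      ∫ x, max (-d₀ x - τ) 0 ∂μ01 ≤ ∫ x, max (-u₀ x - τ) 0 ∂μ01 := by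
    intro τ hτ
    have e1 : ∫ x, max (-d₀ x - τ) 0 ∂μ01 = ∫ x, max (g₂ x - g₁ x - τ) 0 ∂μ01 :=
      integral_congr_ae (hdd₀.mono fun x hx => by
        show max (-d₀ x - τ) 0 = max (g₂ x - g₁ x - τ) 0
        rw [show g₂ x - g₁ x = -d₀ x from by
          rw [← (show g₁ x - g₂ x = d₀ x from hx)]; ring])
    have e2 : ∫ x, max (-u₀ x - τ) 0 ∂μ01 = ∫ x, max (h x - f x - τ) 0 ∂μ01 :=
      integral_congr_ae (huu₀.mono fun x hx => by
        show max (-u₀ x - τ) 0 = max (h x - f x - τ) 0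
        rw [show h x - f x = -u₀ x from by
          rw [← (show f x - h x = u₀ x from hx)]; ring])
    rw [e1, e2]; exact keyB τ hτ
  rcases eq_or_ne p ⊤ with hptop | hptop
  · -- p = ∞
    subst hptop
    rw [eLpNorm_exponent_top, eLpNorm_exponent_top]
    by_cases hU : eLpNormEssSup (fun w => f w - h w) μ01 = ⊤
    · rw [hU]; exact le_top
    set M : ℝ := (eLpNormEssSup (fun w => f w - h w) μ01).toReal with hM
    have hub : ∀ᵐ x ∂μ01, |f x - h x| ≤ M := by
      filter_upwards [ae_le_eLpNormEssSup (f := fun w => f w - h w) (μ := μ01)] with x hx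
      have := ENNReal.toReal_mono hU hx
      simpa [Real.norm_eq_abs] using this
    have hM0 : 0 ≤ M := ENNReal.toReal_nonneg
    have hzero : ∫ x, max (f x - h x - M) 0 ∂μ01 = 0 := by
      have e : (fun x => max (f x - h x - M) 0) =ᶠ[ae μ01] (fun _ => (0:ℝ)) := by
        filter_upwards [hub] with x hx
        show max (f x - h x - M) 0 = 0
        have := abs_le.mp hx
        rw [max_eq_right (by linarith [this.2])]
      rw [integral_congr_ae e, integral_zero]
    have hzero' : ∫ x, max (h x - f x - M) 0 ∂μ01 = 0 := by
      have e : (fun x => max (h x - f x - M) 0) =ᶠ[ae μ01] (fun _ => (0:ℝ)) := by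
        filter_upwards [hub] with x hx
        show max (h x - f x - M) 0 = 0
        have := abs_le.mp hx
        rw [max_eq_right (by linarith [this.1])]
      rw [integral_congr_ae e, integral_zero]
    have intA : Integrable (fun x => max (g₁ x - g₂ x - M) 0) μ01 :=
      ((hd2.sub (memLp_const M)).sup (memLp_const 0)).integrable one_le_two
    have intB : Integrable (fun x => max (g₂ x - g₁ x - M) 0) μ01 :=
      (((hg₂2.sub hg₁2).sub (memLp_const M)).sup (memLp_const 0)).integrable one_le_two
    have hA := (integral_eq_zero_iff_of_nonneg
      (fun x => le_max_right _ _) intA).mp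
      (le_antisymm (by rw [← hzero]; exact keyA M hM0) (integral_nonneg fun x => le_max_right _ _))
    have hB := (integral_eq_zero_iff_of_nonneg
      (fun x => le_max_right _ _) intB).mp
      (le_antisymm (by rw [← hzero']; exact keyB M hM0) (integral_nonneg fun x => le_max_right _ _))
    have habs : ∀ᵐ x ∂μ01, ‖g₁ x - g₂ x‖ ≤ M := by
      filter_upwards [hA, hB] with x hxA hxB
      have h1 : max (g₁ x - g₂ x - M) 0 = 0 := hxA
      have h2 : max (g₂ x - g₁ x - M) 0 = 0 := hxB
      rw [Real.norm_eq_abs, abs_le]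
      constructor
      · nlinarith [le_max_left (g₂ x - g₁ x - M) 0, h2]
      · nlinarith [le_max_left (g₁ x - g₂ x - M) 0, h1]
    calc eLpNormEssSup (fun w => g₁ w - g₂ w) μ01 ≤ ENNReal.ofReal M :=
          eLpNormEssSup_le_of_ae_bound habs
      _ = eLpNormEssSup (fun w => f w - h w) μ01 := ENNReal.ofReal_toReal hU
  · -- p finite
    have hp0 : p ≠ 0 := by intro hc; rw [hc] at hp; exact (by simp at hp)
    set r : ℝ := p.toReal with hrdef
    have hr : 1 ≤ r := by
      have := ENNReal.toReal_mono hptop hp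
      simpa using this
    have hrpos : (0:ℝ) < r := by linarith
    rw [eLpNorm_eq_lintegral_rpow_enorm_toReal hp0 hptop, eLpNorm_eq_lintegral_rpow_enorm_toReal hp0 hptop]
    refine ENNReal.rpow_le_rpow ?_ (by positivity)
    have congr_d : ∫⁻ x, (‖g₁ x - g₂ x‖₊ : ENNReal) ^ r ∂μ01
        = ∫⁻ x, (‖d₀ x‖₊ : ENNReal) ^ r ∂μ01 :=
      lintegral_congr_ae (hdd₀.mono fun x hx => by
        show (‖g₁ x - g₂ x‖₊ : ENNReal) ^ r = (‖d₀ x‖₊ : ENNReal) ^ r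
        rw [show g₁ x - g₂ x = d₀ x from hx])
    have congr_u : ∫⁻ x, (‖f x - h x‖₊ : ENNReal) ^ r ∂μ01
        = ∫⁻ x, (‖u₀ x‖₊ : ENNReal) ^ r ∂μ01 :=
      lintegral_congr_ae (huu₀.mono fun x hx => by
        show (‖f x - h x‖₊ : ENNReal) ^ r = (‖u₀ x‖₊ : ENNReal) ^ r
        rw [show f x - h x = u₀ x from hx])
    have split : ∀ g : ℝ → ℝ, ∀ x : ℝ, (‖g x‖₊ : ENNReal) ^ r
        = ENNReal.ofReal (max (g x) 0) ^ r + ENNReal.ofReal (max (-g x) 0) ^ r := by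
      intro g x
      rcases le_total 0 (g x) with hx | hx
      · rw [← enorm_eq_nnnorm, Real.enorm_eq_ofReal_abs, abs_of_nonneg hx, max_eq_left hx,
          max_eq_right (by linarith : -g x ≤ 0), ENNReal.ofReal_zero,
          ENNReal.zero_rpow_of_pos hrpos, add_zero]
      · rw [← enorm_eq_nnnorm, Real.enorm_eq_ofReal_abs, abs_of_nonpos hx, max_eq_right hx,
          max_eq_left (by linarith : 0 ≤ -g x), ENNReal.ofReal_zero,
          ENNReal.zero_rpow_of_pos hrpos, zero_add]
    have hmes : Measurable fun x => ENNReal.ofReal (max (d₀ x) 0) ^ r := by fun_prop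
    have hmes' : Measurable fun x => ENNReal.ofReal (max (u₀ x) 0) ^ r := by fun_prop
    calc ∫⁻ x, (‖g₁ x - g₂ x‖₊ : ENNReal) ^ r ∂μ01
        = ∫⁻ x, (ENNReal.ofReal (max (d₀ x) 0) ^ r + ENNReal.ofReal (max (-d₀ x) 0) ^ r) ∂μ01 := by
          rw [congr_d]; exact lintegral_congr (split d₀)
      _ = (∫⁻ x, ENNReal.ofReal (max (d₀ x) 0) ^ r ∂μ01)
            + ∫⁻ x, ENNReal.ofReal (max (-d₀ x) 0) ^ r ∂μ01 := lintegral_add_left hmes _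
      _ ≤ (∫⁻ x, ENNReal.ofReal (max (u₀ x) 0) ^ r ∂μ01)
            + ∫⁻ x, ENNReal.ofReal (max (-u₀ x) 0) ^ r ∂μ01 := by
          refine add_le_add ?_ ?_
          · exact posPartLe d₀ u₀ hd₀m hu₀m hd₀2 hu₀2 keyA' r hr
          · exact posPartLe (fun x => -d₀ x) (fun x => -u₀ x) hd₀m.neg hu₀m.neg
              hd₀2.neg hu₀2.neg keyB' r hr
      _ = ∫⁻ x, (‖u₀ x‖₊ : ENNReal) ^ r ∂μ01 := by
          rw [← lintegral_add_left hmes' _]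
          exact (lintegral_congr (split u₀)).symm
      _ = ∫⁻ x, (‖f x - h x‖₊ : ENNReal) ^ r ∂μ01 := congr_u.symm
end
end

section
/- Let K ⊂ L²(0,1) be the closed convex cone of nondecreasing functions and ψ: ℝ → [0,+∞] convex and lower semicontinuous. Then for every f ∈ L²(0,1): ∫₀¹ ψ(Proj_K(f)) dw ≤ ∫₀¹ ψ(f) dw. -/
open MeasureTheory Set Filter

noncomputable section

/-! ### Auxiliary material for `stmt6` -/

instance inst_s6 : IsFiniteMeasure μ01 := by
  constructor
  rw [μ01, Measure.restrict_apply_univ]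
  simp [Real.volume_Ioo]

/-- Existence of a monotone, Lipschitz subgradient selection for a convex function on `ℝ`
which is semiconcave with parameter `n`. -/
lemma subgrad_exists {φ : ℝ → ℝ} {n : ℝ} (hn : 0 ≤ n) (hconv : ConvexOn ℝ Set.univ φ)
    (hconc : ConcaveOn ℝ Set.univ (fun x => φ x - n * x ^ 2)) :
    ∃ s : ℝ → ℝ, Monotone s ∧ (∀ a b : ℝ, a ≤ b → s b - s a ≤ 2 * n * (b - a)) ∧
      ∀ t x, φ t + s t * (x - t) ≤ φ x := by
  set ρ : ℝ → ℝ := fun x => φ x - n * x ^ 2 with hρ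
  have hσ : ConvexOn ℝ Set.univ (fun x => -(φ x - n * x ^ 2)) := hconc.neg
  set s : ℝ → ℝ := fun t => sSup ((fun u => (φ t - φ u) / (t - u)) '' Set.Iio t) with hs
  have hne : ∀ t : ℝ, ((fun u => (φ t - φ u) / (t - u)) '' Set.Iio t).Nonempty :=
    fun t => ⟨_, ⟨t - 1, by norm_num, rfl⟩⟩
  have hub : ∀ t : ℝ, ∀ r ∈ (fun u => (φ t - φ u) / (t - u)) '' Set.Iio t,
      r ≤ φ (t + 1) - φ t := by
    rintro t r ⟨u, hu, rfl⟩
    have hu' : u < t := hu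
    have h := hconv.secant_mono (Set.mem_univ t) (Set.mem_univ u) (Set.mem_univ (t+1))
      (by intro h; exact absurd h (ne_of_lt hu')) (by intro h; nlinarith [h ▸ le_refl t])
      (by linarith)
    have he1 : (φ u - φ t) / (u - t) = (φ t - φ u) / (t - u) := by
      rw [← neg_div_neg_eq]; ring_nf
    have he2 : (φ (t+1) - φ t) / (t + 1 - t) = φ (t+1) - φ t := by
      norm_num
    rw [he1, he2] at h
    exact h
  have hbdd : ∀ t : ℝ, BddAbove ((fun u => (φ t - φ u) / (t - u)) '' Set.Iio t) :=
    fun t => ⟨φ (t+1) - φ t, fun r hr => hub t r hr⟩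
  have hlbmem : ∀ t u : ℝ, u < t → (φ t - φ u) / (t - u) ≤ s t :=
    fun t u hu => le_csSup (hbdd t) ⟨u, hu, rfl⟩
  have hubv : ∀ t v : ℝ, t < v → s t ≤ (φ v - φ t) / (v - t) := by
    intro t v htv
    refine csSup_le (hne t) ?_
    rintro r ⟨u, hu, rfl⟩
    exact hconv.slope_mono_adjacent (Set.mem_univ u) (Set.mem_univ v) hu htv
  have hsub : ∀ t x : ℝ, φ t + s t * (x - t) ≤ φ x := by
    intro t x
    rcases lt_trichotomy x t with h | rfl | h
    · have h1 := hlbmem t x h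
      have htx : 0 < t - x := by linarith
      rw [div_le_iff₀ htx] at h1
      nlinarith
    · simp
    · have h1 := hubv t x h
      have htx : 0 < x - t := by linarith
      rw [le_div_iff₀ htx] at h1
      nlinarith
  have hmono : Monotone s := by
    intro t t' htt'
    rcases eq_or_lt_of_le htt' with rfl | h
    · exact le_rfl
    · exact (hubv t t' h).trans (hlbmem t' t h)
  -- slope decomposition
  have hslope : ∀ u v : ℝ, u < v →
      (φ v - φ u) / (v - u) = (ρ v - ρ u) / (v - u) + n * (v + u) := by
    intro u v huv
    have hvu : v - u ≠ 0 := by intro h; nlinarith [h]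
    field_simp [hρ]
    ring
  -- slope facts for ρ (concave)
  have hρslope1 : ∀ u a b : ℝ, u < a → a ≤ b → u < b →
      (ρ b - ρ u) / (b - u) ≤ (ρ a - ρ u) / (a - u) := by
    intro u a b hua hab hub'
    have h := hσ.secant_mono (Set.mem_univ u) (Set.mem_univ a) (Set.mem_univ b)
      (ne_of_gt hua) (ne_of_gt hub') hab
    have e1 : (-(φ a - n * a ^ 2) - -(φ u - n * u ^ 2)) / (a - u) = -((ρ a - ρ u) / (a - u)) := by
      rw [hρ]; ring
    have e2 : (-(φ b - n * b ^ 2) - -(φ u - n * u ^ 2)) / (b - u) = -((ρ b - ρ u) / (b - u)) := by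
      rw [hρ]; ring
    rw [e1, e2] at h
    linarith
  have hρslope2 : ∀ v u b : ℝ, v ≤ u → v < b → u < b →
      (ρ b - ρ u) / (b - u) ≤ (ρ b - ρ v) / (b - v) := by
    intro v u b hvu hvb hub'
    have h := hσ.secant_mono (Set.mem_univ b) (Set.mem_univ v) (Set.mem_univ u)
      (ne_of_lt hvb) (ne_of_lt hub') hvu
    have e1 : (-(φ v - n * v ^ 2) - -(φ b - n * b ^ 2)) / (v - b)
        = -((ρ b - ρ v) / (b - v)) := by
      rw [show v - b = -(b - v) by ring, div_neg, hρ]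
      ring_nf
    have e2 : (-(φ u - n * u ^ 2) - -(φ b - n * b ^ 2)) / (u - b)
        = -((ρ b - ρ u) / (b - u)) := by
      rw [show u - b = -(b - u) by ring, div_neg, hρ]
      ring_nf
    rw [e1, e2] at h
    linarith
  refine ⟨s, hmono, ?_, hsub⟩
  intro a b hab
  rcases eq_or_lt_of_le hab with rfl | hab'
  · simp
  have key : ∀ ε : ℝ, 0 < ε → s b - ε ≤ s a + 2 * n * (b - a) := by
    intro ε hε
    set δ : ℝ := ε / (n + 1) with hδ
    have hδpos : 0 < δ := div_pos hε (by linarith)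
    have hnδ : n * δ ≤ ε := by
      rw [hδ, mul_comm, div_mul_eq_mul_div, div_le_iff₀ (by linarith : (0:ℝ) < n + 1)]
      nlinarith
    have hsb : s b ≤ s a + 2 * n * (b - a) + n * δ := by
      refine csSup_le (hne b) ?_
      rintro r ⟨u, hu, rfl⟩
      have hu' : u < b := hu
      rcases lt_or_ge u a with hua | hau
      · -- case u < a
        have h1 := hlbmem a u hua
        rw [hslope u a hua] at h1
        have h2 := hρslope1 u a b hua hab hu'
        show (φ b - φ u) / (b - u) ≤ s a + 2 * n * (b - a) + n * δ
        rw [hslope u b hu']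
        have hnba : n * (b + u) ≤ n * (a + u) + n * (b - a) := by nlinarith
        nlinarith [mul_nonneg hn hδpos.le]
      · -- case a ≤ u < b
        set v : ℝ := a - δ with hv
        have hva : v < a := by rw [hv]; linarith
        have hvu : v ≤ u := by rw [hv]; linarith
        have hvb : v < b := by rw [hv]; linarith
        have h1 := hlbmem a v hva
        rw [hslope v a hva] at h1
        have h2 := hρslope2 v u b hvu hvb hu'
        have h3 := hρslope1 v a b hva hab hvb
        show (φ b - φ u) / (b - u) ≤ s a + 2 * n * (b - a) + n * δ
        rw [hslope u b hu']
        -- slope_ρ(u,b) ≤ slope_ρ(v,b) ≤ slope_ρ(v,a) ≤ s a - n(a+v)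
        have h4 : (ρ b - ρ u) / (b - u) ≤ s a - n * (a + v) := by linarith
        have h5 : n * (b + u) ≤ n * (a + v) + 2 * n * (b - a) + n * δ := by
          have hub2 : u ≤ b := le_of_lt hu'
          have : b + u - (a + v) = (b - a) + (u - a) + δ := by rw [hv]; ring
          nlinarith [mul_nonneg hn (by linarith : (0:ℝ) ≤ b - u)]
        nlinarith [h4, h5]
    linarith
  have := le_of_forall_sub_le fun ε hε => (key ε hε)
  linarith

/-- Quadratic Moreau–Yosida approximation of `ψ`. -/
def moyo (ψ : ℝ → ENNReal) (n : ℕ) (x : ℝ) : ENNReal :=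
  ⨅ y : ℝ, ψ y + ENNReal.ofReal (n * (x - y) ^ 2)

lemma moyo_le (ψ : ℝ → ENNReal) (n : ℕ) (x : ℝ) : moyo ψ n x ≤ ψ x := by
  have := iInf_le (fun y : ℝ => ψ y + ENNReal.ofReal (n * (x - y) ^ 2)) x
  simpa [moyo] using this

lemma moyo_mono (ψ : ℝ → ENNReal) (x : ℝ) : Monotone (fun n => moyo ψ n x) := by
  intro m n hmn
  refine iInf_mono fun y => add_le_add_right (ENNReal.ofReal_le_ofReal ?_) _
  exact mul_le_mul_of_nonneg_right (by exact_mod_cast hmn) (sq_nonneg _)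

lemma moyo_ne_top {ψ : ℝ → ENNReal} {y₀ : ℝ} (hy₀ : ψ y₀ ≠ ⊤) (n : ℕ) (x : ℝ) :
    moyo ψ n x ≠ ⊤ := by
  refine ne_top_of_le_ne_top ?_ (iInf_le _ y₀)
  exact ENNReal.add_ne_top.2 ⟨hy₀, ENNReal.ofReal_ne_top⟩

lemma moyo_iSup {ψ : ℝ → ENNReal} (hψl : LowerSemicontinuous ψ) (x : ℝ) :
    ⨆ n, moyo ψ n x = ψ x := by
  refine le_antisymm (iSup_le fun n => moyo_le ψ n x) ?_
  refine le_of_forall_lt_imp_le_of_dense fun c hc => ?_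
  have hc' : c ≠ ⊤ := hc.ne_top
  obtain ⟨δ, hδ, hball⟩ := Metric.eventually_nhds_iff.mp (hψl x c hc)
  obtain ⟨n, hn⟩ := exists_nat_ge (c.toReal / δ ^ 2)
  have key : c ≤ moyo ψ n x := by
    refine le_iInf fun y => ?_
    rcases lt_or_ge (dist y x) δ with h | h
    · exact le_trans (le_of_lt (hball h)) le_self_add
    · refine le_trans ?_ le_add_self
      rw [← ENNReal.ofReal_toReal hc']
      refine ENNReal.ofReal_le_ofReal ?_
      have hdy : δ ≤ |x - y| := by
        rw [Real.dist_eq, abs_sub_comm] at h; exact h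
      have h2 : δ ^ 2 ≤ (x - y) ^ 2 := by
        rw [← sq_abs (x - y)]
        exact pow_le_pow_left₀ hδ.le hdy 2
      have h3 : c.toReal ≤ n * δ ^ 2 := by
        rw [div_le_iff₀ (by positivity)] at hn; linarith
      calc c.toReal ≤ n * δ ^ 2 := h3
      _ ≤ n * (x - y) ^ 2 := mul_le_mul_of_nonneg_left h2 (by positivity)
  calc c ≤ moyo ψ n x := key
  _ ≤ ⨆ m, moyo ψ m x := le_iSup (fun m => moyo ψ m x) n

lemma moyo_convex {ψ : ℝ → ENNReal}
    (hψc : ∀ x y θ : ℝ, 0 ≤ θ → θ ≤ 1 →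
      ψ (θ * x + (1 - θ) * y) ≤ ENNReal.ofReal θ * ψ x + ENNReal.ofReal (1 - θ) * ψ y)
    (n : ℕ) (x y θ : ℝ) (h0 : 0 ≤ θ) (h1 : θ ≤ 1) :
    moyo ψ n (θ * x + (1 - θ) * y) ≤
      ENNReal.ofReal θ * moyo ψ n x + ENNReal.ofReal (1 - θ) * moyo ψ n y := by
  simp only [moyo]
  rw [ENNReal.mul_iInf' (by simp) (fun _ => inferInstance)]
  rw [ENNReal.mul_iInf' (by simp) (fun _ => inferInstance)]
  rw [ENNReal.iInf_add]
  refine le_iInf fun u => ?_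
  rw [ENNReal.add_iInf]
  refine le_iInf fun v => ?_
  refine le_trans (iInf_le _ (θ * u + (1 - θ) * v)) ?_
  have hpen : ENNReal.ofReal ((n:ℝ) * (θ * x + (1 - θ) * y - (θ * u + (1 - θ) * v)) ^ 2) ≤
      ENNReal.ofReal θ * ENNReal.ofReal ((n:ℝ) * (x - u) ^ 2) +
      ENNReal.ofReal (1 - θ) * ENNReal.ofReal ((n:ℝ) * (y - v) ^ 2) := by
    rw [← ENNReal.ofReal_mul h0, ← ENNReal.ofReal_mul (by linarith : (0:ℝ) ≤ 1 - θ),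
      ← ENNReal.ofReal_add (mul_nonneg h0 (by positivity))
        (mul_nonneg (by linarith) (by positivity))]
    refine ENNReal.ofReal_le_ofReal ?_
    have habs : (θ * x + (1 - θ) * y - (θ * u + (1 - θ) * v)) ^ 2 ≤
        θ * (x - u) ^ 2 + (1 - θ) * (y - v) ^ 2 := by
      nlinarith [sq_nonneg ((x - u) - (y - v)), mul_nonneg h0 (by linarith : (0:ℝ) ≤ 1 - θ)]
    calc (n:ℝ) * (θ * x + (1 - θ) * y - (θ * u + (1 - θ) * v)) ^ 2
        ≤ (n:ℝ) * (θ * (x - u) ^ 2 + (1 - θ) * (y - v) ^ 2) :=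
          mul_le_mul_of_nonneg_left habs (by positivity)
    _ = θ * ((n:ℝ) * (x - u) ^ 2) + (1 - θ) * ((n:ℝ) * (y - v) ^ 2) := by ring
  calc ψ (θ * u + (1 - θ) * v) +
        ENNReal.ofReal ((n:ℝ) * (θ * x + (1 - θ) * y - (θ * u + (1 - θ) * v)) ^ 2)
      ≤ (ENNReal.ofReal θ * ψ u + ENNReal.ofReal (1 - θ) * ψ v) +
        (ENNReal.ofReal θ * ENNReal.ofReal ((n:ℝ) * (x - u) ^ 2) +
         ENNReal.ofReal (1 - θ) * ENNReal.ofReal ((n:ℝ) * (y - v) ^ 2)) :=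
        add_le_add (hψc u v θ h0 h1) hpen
  _ = ENNReal.ofReal θ * (ψ u + ENNReal.ofReal ((n:ℝ) * (x - u) ^ 2)) +
      ENNReal.ofReal (1 - θ) * (ψ v + ENNReal.ofReal ((n:ℝ) * (y - v) ^ 2)) := by
        rw [mul_add, mul_add]; ring

lemma moyo_semiconcave (ψ : ℝ → ENNReal) (n : ℕ) (x y a b : ℝ)
    (ha : 0 ≤ a) (hb : 0 ≤ b) (hab : a + b = 1) :
    ENNReal.ofReal a * moyo ψ n x + ENNReal.ofReal b * moyo ψ n y ≤
      moyo ψ n (a * x + b * y) + ENNReal.ofReal ((n:ℝ) * (a * b * (x - y) ^ 2)) := by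
  conv_rhs => rw [moyo]
  rw [ENNReal.iInf_add]
  refine le_iInf fun z => ?_
  have h1 : ENNReal.ofReal a * moyo ψ n x ≤
      ENNReal.ofReal a * (ψ z + ENNReal.ofReal ((n:ℝ) * (x - z) ^ 2)) :=
    mul_le_mul_right (iInf_le _ z) _
  have h2 : ENNReal.ofReal b * moyo ψ n y ≤
      ENNReal.ofReal b * (ψ z + ENNReal.ofReal ((n:ℝ) * (y - z) ^ 2)) :=
    mul_le_mul_right (iInf_le _ z) _
  refine le_trans (add_le_add h1 h2) ?_
  rw [mul_add, mul_add, ← ENNReal.ofReal_mul ha, ← ENNReal.ofReal_mul hb]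
  have hsum : ENNReal.ofReal a * ψ z + ENNReal.ofReal (a * ((n:ℝ) * (x - z) ^ 2)) +
      (ENNReal.ofReal b * ψ z + ENNReal.ofReal (b * ((n:ℝ) * (y - z) ^ 2))) =
      (ENNReal.ofReal a + ENNReal.ofReal b) * ψ z +
      (ENNReal.ofReal (a * ((n:ℝ) * (x - z) ^ 2)) +
       ENNReal.ofReal (b * ((n:ℝ) * (y - z) ^ 2))) := by
    rw [add_mul]; ring
  rw [hsum, ← ENNReal.ofReal_add ha hb, hab, ENNReal.ofReal_one, one_mul,
    ← ENNReal.ofReal_add (mul_nonneg ha (by positivity)) (mul_nonneg hb (by positivity))]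
  have hid : a * ((n:ℝ) * (x - z) ^ 2) + b * ((n:ℝ) * (y - z) ^ 2) =
      (n:ℝ) * (a * x + b * y - z) ^ 2 + (n:ℝ) * (a * b * (x - y) ^ 2) := by
    have hb' : b = 1 - a := by linarith
    rw [hb']; ring
  rw [hid, ENNReal.ofReal_add (by positivity) (by positivity), ← add_assoc]

/-- The key inequality for a single convex, nonnegative, semiconcave function with
quadratic growth. -/
lemma key_ineq (f g : ℝ → ℝ) (hf : MeasureTheory.MemLp f 2 μ01) (hg : IsProjK f g)
    {φ : ℝ → ℝ} {n C y₀ : ℝ} (hn : 0 ≤ n) (hφ0 : ∀ x, 0 ≤ φ x)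
    (hconv : ConvexOn ℝ Set.univ φ)
    (hconc : ConcaveOn ℝ Set.univ (fun x => φ x - n * x ^ 2))
    (hgrow : ∀ x, φ x ≤ C + n * (x - y₀) ^ 2) :
    (∫⁻ w, ENNReal.ofReal (φ (g w)) ∂μ01) ≤ ∫⁻ w, ENNReal.ofReal (φ (f w)) ∂μ01 := by
  have hcont : Continuous φ := by
    rw [← continuousOn_univ]
    exact hconv.continuousOn isOpen_univ
  have hfi : Integrable f μ01 := hf.integrable (by norm_num)
  have hgL2 : MeasureTheory.MemLp g 2 μ01 := hg.1.2
  have hgi : Integrable g μ01 := hgL2.integrable (by norm_num)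
  have hgmono : MonotoneOn g (Set.Ioo 0 1) := hg.1.1
  obtain ⟨s, hsmono, hslip, hsub⟩ := subgrad_exists hn hconv hconc
  have hsmeas : Measurable s := hsmono.measurable
  have hgaem : AEMeasurable g μ01 := hgL2.aestronglyMeasurable.aemeasurable
  have hsg_aesm : AEStronglyMeasurable (fun w => s (g w)) μ01 :=
    (hsmeas.comp_aemeasurable hgaem).aestronglyMeasurable
  -- bound |s t| ≤ |s 0| + 2n|t|
  have hsbd : ∀ t : ℝ, |s t| ≤ |s 0| + 2 * n * |t| := by
    intro t
    rcases le_total 0 t with h | h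
    · have h1 := hslip 0 t h
      have h2 := hsmono h
      rw [abs_of_nonneg h, abs_le]
      constructor
      · nlinarith [neg_abs_le (s 0)]
      · nlinarith [le_abs_self (s 0)]
    · have h1 := hslip t 0 h
      have h2 := hsmono h
      rw [abs_of_nonpos h, abs_le]
      constructor
      · nlinarith [neg_abs_le (s 0)]
      · nlinarith [le_abs_self (s 0)]
  have hsgmem : MeasureTheory.MemLp (fun w => s (g w)) 2 μ01 := by
    refine MeasureTheory.MemLp.of_le
      ((memLp_const (|s 0|)).add ((hgL2.norm.const_mul (2*n)))) hsg_aesm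
      (ae_of_all _ fun w => ?_)
    have h1 := hsbd (g w)
    have h2n : (0:ℝ) ≤ 2 * n := by linarith
    simp only [Pi.add_apply, Real.norm_eq_abs]
    rw [abs_of_nonneg (add_nonneg (abs_nonneg _) (mul_nonneg h2n (abs_nonneg _)))]
    exact h1
  -- the test function z = g - ε • (s ∘ g)
  set ε : ℝ := 1 / (2 * n + 1) with hε
  have hεpos : 0 < ε := by rw [hε]; positivity
  have hεn : ε * (2 * n) ≤ 1 := by
    rw [hε, div_mul_eq_mul_div, one_mul, div_le_one (by linarith)]
    linarith
  have hzK : (fun w => g w - ε * s (g w)) ∈ coneK := by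
    constructor
    · intro a ha b hb hab
      have h1 : g a ≤ g b := hgmono ha hb hab
      have h2 := hslip (g a) (g b) h1
      have h3 : ε * (s (g b) - s (g a)) ≤ ε * (2 * n * (g b - g a)) :=
        mul_le_mul_of_nonneg_left h2 hεpos.le
      have h4 : ε * (2 * n * (g b - g a)) = (ε * (2*n)) * (g b - g a) := by ring
      have h5 : (ε * (2*n)) * (g b - g a) ≤ 1 * (g b - g a) :=
        mul_le_mul_of_nonneg_right hεn (by linarith)
      simp only
      nlinarith
    · exact hgL2.sub (hsgmem.const_mul ε)
  have hvar' : (∫ w, (f w - g w) * ((g w - ε * s (g w)) - g w) ∂μ01) ≤ 0 := hg.2 _ hzK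
  have hI : 0 ≤ ∫ w, s (g w) * (f w - g w) ∂μ01 := by
    have he : (fun w => (f w - g w) * ((g w - ε * s (g w)) - g w))
        = fun w => (-ε) • (s (g w) * (f w - g w)) := funext fun w => by
          simp only [smul_eq_mul]; ring
    rw [he, integral_smul, smul_eq_mul] at hvar'
    nlinarith
  -- integrability
  have hfy : Integrable (fun w => (f w - y₀) ^ 2) μ01 := (hf.sub (memLp_const y₀)).integrable_sq
  have hgy : Integrable (fun w => (g w - y₀) ^ 2) μ01 := (hgL2.sub (memLp_const y₀)).integrable_sq
  have hφg : Integrable (fun w => φ (g w)) μ01 := by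
    refine Integrable.mono' ((integrable_const C).add (hgy.const_mul n))
      (hcont.comp_aestronglyMeasurable hgL2.aestronglyMeasurable)
      (ae_of_all _ fun w => ?_)
    rw [Real.norm_eq_abs, abs_of_nonneg (hφ0 _)]
    exact hgrow (g w)
  have hφf : Integrable (fun w => φ (f w)) μ01 := by
    refine Integrable.mono' ((integrable_const C).add (hfy.const_mul n))
      (hcont.comp_aestronglyMeasurable hf.aestronglyMeasurable)
      (ae_of_all _ fun w => ?_)
    rw [Real.norm_eq_abs, abs_of_nonneg (hφ0 _)]
    exact hgrow (f w)
  have hsg2 : Integrable (fun w => s (g w) ^ 2) μ01 := hsgmem.integrable_sq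
  have hfg2 : Integrable (fun w => (f w - g w) ^ 2) μ01 := (hf.sub hgL2).integrable_sq
  have hsfg : Integrable (fun w => s (g w) * (f w - g w)) μ01 := by
    refine Integrable.mono' (((hsg2.add hfg2).const_mul (1/2 : ℝ)))
      (hsg_aesm.mul (hfi.sub hgi).aestronglyMeasurable)
      (ae_of_all _ fun w => ?_)
    simp only [Pi.add_apply]
    rw [Real.norm_eq_abs, abs_mul]
    nlinarith [sq_nonneg (|s (g w)| - |f w - g w|), sq_abs (s (g w)), sq_abs (f w - g w),
      abs_nonneg (s (g w)), abs_nonneg (f w - g w)]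
  have hpt : ∀ w, φ (g w) ≤ φ (f w) - s (g w) * (f w - g w) := fun w => by
    have := hsub (g w) (f w)
    linarith
  have hmain : (∫ w, φ (g w) ∂μ01) ≤ ∫ w, φ (f w) ∂μ01 := by
    have h1 : (∫ w, φ (g w) ∂μ01) ≤ ∫ w, (φ (f w) - s (g w) * (f w - g w)) ∂μ01 :=
      integral_mono hφg (hφf.sub hsfg) hpt
    rw [integral_sub hφf hsfg] at h1
    linarith
  rw [← ofReal_integral_eq_lintegral_ofReal hφg (ae_of_all _ fun w => hφ0 _),
    ← ofReal_integral_eq_lintegral_ofReal hφf (ae_of_all _ fun w => hφ0 _)]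
  exact ENNReal.ofReal_le_ofReal hmain

theorem stmt6 (ψ : ℝ → ENNReal) (f g : ℝ → ℝ)
    (hψc : ∀ x y θ : ℝ, 0 ≤ θ → θ ≤ 1 →
      ψ (θ * x + (1 - θ) * y) ≤ ENNReal.ofReal θ * ψ x + ENNReal.ofReal (1 - θ) * ψ y)
    (hψl : LowerSemicontinuous ψ)
    (hf : MeasureTheory.MemLp f 2 μ01) (hg : IsProjK f g) :
    (∫⁻ w in Set.Ioo (0:ℝ) 1, ψ (g w)) ≤ ∫⁻ w in Set.Ioo (0:ℝ) 1, ψ (f w) := by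
  by_cases hfin : ∀ y, ψ y = ⊤
  · simp only [hfin]
    exact le_rfl
  push_neg at hfin
  obtain ⟨y₀, hy₀⟩ := hfin
  set φ : ℕ → ℝ → ℝ := fun n x => (moyo ψ n x).toReal with hφdef
  have hne : ∀ (n : ℕ) (x : ℝ), moyo ψ n x ≠ ⊤ := fun n x => moyo_ne_top hy₀ n x
  have hofReal : ∀ (n : ℕ) (x : ℝ), ENNReal.ofReal (φ n x) = moyo ψ n x :=
    fun n x => ENNReal.ofReal_toReal (hne n x)
  have hφ0 : ∀ (n : ℕ) (x : ℝ), 0 ≤ φ n x := fun n x => ENNReal.toReal_nonneg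
  have hgrow : ∀ (n : ℕ) (x : ℝ), φ n x ≤ (ψ y₀).toReal + (n:ℝ) * (x - y₀) ^ 2 := by
    intro n x
    have h := iInf_le (fun y : ℝ => ψ y + ENNReal.ofReal ((n:ℝ) * (x - y) ^ 2)) y₀
    have hfin2 : ψ y₀ + ENNReal.ofReal ((n:ℝ) * (x - y₀) ^ 2) ≠ ⊤ :=
      ENNReal.add_ne_top.2 ⟨hy₀, ENNReal.ofReal_ne_top⟩
    have h2 := ENNReal.toReal_mono hfin2 h
    rwa [ENNReal.toReal_add hy₀ ENNReal.ofReal_ne_top,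
      ENNReal.toReal_ofReal (by positivity)] at h2
  have hconv : ∀ n : ℕ, ConvexOn ℝ Set.univ (φ n) := by
    intro n
    refine ⟨convex_univ, fun x _ y _ a b ha hb hab => ?_⟩
    have h := moyo_convex hψc n x y a ha (by linarith)
    have hb' : (1:ℝ) - a = b := by linarith
    rw [hb'] at h
    have hfin2 : ENNReal.ofReal a * moyo ψ n x + ENNReal.ofReal b * moyo ψ n y ≠ ⊤ :=
      ENNReal.add_ne_top.2 ⟨ENNReal.mul_ne_top ENNReal.ofReal_ne_top (hne n x),
        ENNReal.mul_ne_top ENNReal.ofReal_ne_top (hne n y)⟩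
    have h2 := ENNReal.toReal_mono hfin2 h
    rw [ENNReal.toReal_add (ENNReal.mul_ne_top ENNReal.ofReal_ne_top (hne n x))
        (ENNReal.mul_ne_top ENNReal.ofReal_ne_top (hne n y)),
      ENNReal.toReal_mul, ENNReal.toReal_mul, ENNReal.toReal_ofReal ha,
      ENNReal.toReal_ofReal hb] at h2
    simpa [smul_eq_mul, φ] using h2
  have hconc : ∀ n : ℕ, ConcaveOn ℝ Set.univ (fun x => φ n x - (n:ℝ) * x ^ 2) := by
    intro n
    refine ⟨convex_univ, fun x _ y _ a b ha hb hab => ?_⟩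
    have h := moyo_semiconcave ψ n x y a b ha hb hab
    have hfin2 : moyo ψ n (a * x + b * y) + ENNReal.ofReal ((n:ℝ) * (a*b*(x-y)^2)) ≠ ⊤ :=
      ENNReal.add_ne_top.2 ⟨hne n _, ENNReal.ofReal_ne_top⟩
    have h2 := ENNReal.toReal_mono hfin2 h
    rw [ENNReal.toReal_add (ENNReal.mul_ne_top ENNReal.ofReal_ne_top (hne n x))
        (ENNReal.mul_ne_top ENNReal.ofReal_ne_top (hne n y)),
      ENNReal.toReal_add (hne n _) ENNReal.ofReal_ne_top,
      ENNReal.toReal_mul, ENNReal.toReal_mul, ENNReal.toReal_ofReal ha,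
      ENNReal.toReal_ofReal hb,
      ENNReal.toReal_ofReal (by positivity)] at h2
    have hid : (n:ℝ) * (a*b*(x-y)^2) + (n:ℝ) * ((a*x+b*y)^2) = (n:ℝ)*(a*x^2) + (n:ℝ)*(b*y^2) := by
      rw [show b = 1 - a by linarith]; ring
    simp only [smul_eq_mul]
    have hgoal : a * (φ n x - (n:ℝ) * x ^ 2) + b * (φ n y - (n:ℝ) * y ^ 2)
        = a * φ n x + b * φ n y - ((n:ℝ)*(a*x^2) + (n:ℝ)*(b*y^2)) := by ring
    rw [hgoal, ← hid]
    have : a * φ n x + b * φ n y ≤ φ n (a * x + b * y) + (n:ℝ) * (a*b*(x-y)^2) := h2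
    linarith
  have hgaem : AEMeasurable g μ01 := hg.1.2.aestronglyMeasurable.aemeasurable
  have hcont : ∀ n : ℕ, Continuous (φ n) := by
    intro n
    rw [← continuousOn_univ]
    exact (hconv n).continuousOn isOpen_univ
  show (∫⁻ w, ψ (g w) ∂μ01) ≤ ∫⁻ w, ψ (f w) ∂μ01
  calc (∫⁻ w, ψ (g w) ∂μ01) = ∫⁻ w, ⨆ n, moyo ψ n (g w) ∂μ01 :=
        lintegral_congr fun w => (moyo_iSup hψl (g w)).symm
  _ = ⨆ n, ∫⁻ w, moyo ψ n (g w) ∂μ01 := by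
      refine lintegral_iSup' (fun n => ?_) (ae_of_all _ fun w => fun m k hmk =>
        moyo_mono ψ (g w) hmk)
      have heqn : (fun w => moyo ψ n (g w)) = fun w => ENNReal.ofReal (φ n (g w)) :=
        funext fun w => (hofReal n (g w)).symm
      rw [heqn]
      exact ENNReal.measurable_ofReal.comp_aemeasurable
        (((hcont n).measurable).comp_aemeasurable hgaem)
  _ ≤ ⨆ n, ∫⁻ w, moyo ψ n (f w) ∂μ01 := by
      refine iSup_mono fun n => ?_
      rw [show (∫⁻ w, moyo ψ n (g w) ∂μ01) = ∫⁻ w, ENNReal.ofReal (φ n (g w)) ∂μ01 from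
          lintegral_congr fun w => (hofReal n (g w)).symm,
        show (∫⁻ w, moyo ψ n (f w) ∂μ01) = ∫⁻ w, ENNReal.ofReal (φ n (f w)) ∂μ01 from
          lintegral_congr fun w => (hofReal n (f w)).symm]
      exact key_ineq f g hf hg (by positivity) (hφ0 n) (hconv n) (hconc n) (hgrow n)
  _ ≤ ∫⁻ w, ψ (f w) ∂μ01 := iSup_le fun n => lintegral_mono fun w => moyo_le ψ n (f w)

end
end

section
/- Let g ∈ K and ξ ∈ L²(0,1) with primitive Ξ(w) = ∫₀ʷ ξ(s) ds. Then ξ belongs to the subdifferential ∂I_K(g) of the indicator function of K at g if and only if Ξ ≥ 0 on [0,1], Ξ(0) = Ξ(1) = 0, and Ξ vanishes on the complement of the open set Ω_g where g is locally essentially constant. -/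
open MeasureTheory Set Filter

noncomputable section

namespace Stmt9Aux

open Function


instance : IsFiniteMeasure μ01 := by
  constructor
  rw [μ01, Measure.restrict_apply_univ]
  simp [Real.volume_Ioo]

lemma integrable_of_mem2 {f : ℝ → ℝ} (hf : MeasureTheory.MemLp f 2 μ01) :
    Integrable f μ01 :=
  hf.integrable (by norm_num)

lemma integrableOn_of_mem2 {f : ℝ → ℝ} (hf : MeasureTheory.MemLp f 2 μ01) :
    IntegrableOn f (Set.Ioo 0 1) volume :=
  integrable_of_mem2 hf

lemma integrable_mul2 {f h : ℝ → ℝ} (hf : MeasureTheory.MemLp f 2 μ01)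
    (hh : MeasureTheory.MemLp h 2 μ01) :
    Integrable (fun x => f x * h x) μ01 := by
  have h1 := L2.integrable_inner (𝕜 := ℝ) (hf.toLp f) (hh.toLp h)
  have h2 : (fun x => (inner ℝ (((hf.toLp f) : Lp ℝ 2 μ01) x) (((hh.toLp h) : Lp ℝ 2 μ01) x) : ℝ))
      =ᵐ[μ01] fun x => f x * h x := by
    filter_upwards [hf.coeFn_toLp, hh.coeFn_toLp] with x h1 h2
    simp [h1, h2, real_inner_comm, RCLike.inner_apply, mul_comm]
  exact h1.congr h2



variable {ξ : ℝ → ℝ}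

lemma intInt (hi : IntegrableOn ξ (Set.Ioo 0 1) volume) {a b : ℝ}
    (h0 : 0 ≤ a) (hab : a ≤ b) (hb : b ≤ 1) : IntervalIntegrable ξ volume a b := by
  rw [intervalIntegrable_iff_integrableOn_Ioo_of_le hab]
  exact hi.mono_set (fun x hx => ⟨lt_of_le_of_lt h0 hx.1, lt_of_lt_of_le hx.2 hb⟩)

lemma Xi_diff (hi : IntegrableOn ξ (Set.Ioo 0 1) volume) {a b : ℝ}
    (h0 : 0 ≤ a) (hab : a ≤ b) (hb : b ≤ 1) :
    ∫ x in Set.Ioo a b, ξ x = (∫ s in (0:ℝ)..b, ξ s) - ∫ s in (0:ℝ)..a, ξ s := by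
  rw [intervalIntegral.integral_interval_sub_left (intInt hi le_rfl (h0.trans hab) hb)
    (intInt hi le_rfl h0 (hab.trans hb)), intervalIntegral.integral_of_le hab,
    integral_Ioc_eq_integral_Ioo]

lemma Xi_cont (hi : IntegrableOn ξ (Set.Ioo 0 1) volume) :
    ContinuousOn (fun w => ∫ s in (0:ℝ)..w, ξ s) (Set.Icc 0 1) := by
  have h : IntegrableOn ξ (Set.uIcc 0 1) volume := by
    rw [Set.uIcc_of_le (by norm_num : (0:ℝ) ≤ 1), integrableOn_Icc_iff_integrableOn_Ioc,
      integrableOn_Ioc_iff_integrableOn_Ioo]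
    exact hi
  have := intervalIntegral.continuousOn_primitive_interval h
  rwa [Set.uIcc_of_le (by norm_num : (0:ℝ) ≤ 1)] at this



def clampf (A B : ℝ) (h : ℝ → ℝ) : ℝ → ℝ := fun x => max A (min B (h x))

def upSet (φ : ℝ → ℝ) (t : ℝ) : Set ℝ := {x | x ∈ Set.Ioo (0:ℝ) 1 ∧ t < φ x}

def sInfLev (φ : ℝ → ℝ) (t : ℝ) : ℝ := sInf (insert 1 (upSet φ t))

lemma clampf_mono {φ : ℝ → ℝ} (hm : MonotoneOn φ (Set.Ioo 0 1)) (A B : ℝ) :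
    MonotoneOn (clampf A B φ) (Set.Ioo 0 1) := fun x hx y hy hxy =>
  max_le_max le_rfl (min_le_min le_rfl (hm hx hy hxy))

lemma clampf_le {A B : ℝ} (hAB : A ≤ B) (φ : ℝ → ℝ) (x : ℝ) :
    A ≤ clampf A B φ x ∧ clampf A B φ x ≤ B :=
  ⟨le_max_left _ _, max_le hAB (min_le_left _ _)⟩

lemma upSet_bddBelow (φ : ℝ → ℝ) (t : ℝ) : BddBelow (insert 1 (upSet φ t)) :=
  ⟨0, fun x hx => by
    rcases hx with h | h
    · simp [h]
    · exact h.1.1.le⟩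

lemma sInfLev_mem (φ : ℝ → ℝ) (t : ℝ) : sInfLev φ t ∈ Set.Icc (0:ℝ) 1 := by
  constructor
  · exact le_csInf (insert_nonempty _ _) (fun x hx => by
      rcases hx with h | h
      · simp [h]
      · exact h.1.1.le)
  · exact csInf_le (upSet_bddBelow φ t) (mem_insert _ _)

lemma Ioo_subset_upSet {φ : ℝ → ℝ} (hm : MonotoneOn φ (Set.Ioo 0 1)) (t : ℝ) :
    Set.Ioo (sInfLev φ t) 1 ⊆ upSet φ t := by
  intro x hx
  obtain ⟨y, hy, hyx⟩ := exists_lt_of_csInf_lt (insert_nonempty _ _) hx.1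
  rcases hy with h | h
  · exact absurd (h ▸ hyx) (not_lt.2 hx.2.le)
  · have hxI : x ∈ Set.Ioo (0:ℝ) 1 := ⟨h.1.1.trans hyx, hx.2⟩
    exact ⟨hxI, h.2.trans_le (hm h.1 hxI hyx.le)⟩

lemma upSet_subset (φ : ℝ → ℝ) (t : ℝ) :
    upSet φ t ⊆ insert (sInfLev φ t) (Set.Ioo (sInfLev φ t) 1) := by
  intro x hx
  have h1 : sInfLev φ t ≤ x := csInf_le (upSet_bddBelow φ t) (mem_insert_of_mem _ hx)
  rcases eq_or_lt_of_le h1 with h | h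
  · exact mem_insert_iff.2 (Or.inl h.symm)
  · exact mem_insert_of_mem _ ⟨h, hx.1.2⟩

lemma psi_eq {ξ φ : ℝ → ℝ} (hm : MonotoneOn φ (Set.Ioo 0 1)) (t : ℝ) :
    ∫ x in Set.Ioo (0:ℝ) 1, (if t < φ x then ξ x else 0) =
      ∫ x in Set.Ioo (sInfLev φ t) 1, ξ x := by
  set s := sInfLev φ t with hs
  have hs01 := sInfLev_mem φ t
  have key : ∀ᵐ x ∂(volume.restrict (Set.Ioo (0:ℝ) 1)),
      (if t < φ x then ξ x else 0) = (Set.Ioo s 1).indicator ξ x := by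
    have hnull : (volume.restrict (Set.Ioo (0:ℝ) 1))
        {x | ¬((if t < φ x then ξ x else 0) = (Set.Ioo s 1).indicator ξ x)} = 0 := by
      apply measure_mono_null (t := {s} ∪ (Set.Ioo (0:ℝ) 1)ᶜ)
      · intro x hx
        simp only [mem_setOf_eq] at hx
        by_cases hxI : x ∈ Set.Ioo (0:ℝ) 1
        · left
          by_contra hxs
          apply hx
          by_cases hup : x ∈ upSet φ t
          · have hxIoo : x ∈ Set.Ioo s 1 := by
              rcases upSet_subset φ t hup with h | h
              · exact absurd h hxs
              · exact h
            rw [if_pos hup.2, Set.indicator_of_mem hxIoo]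
          · have hnot : x ∉ Set.Ioo s 1 := fun hc => hup (Ioo_subset_upSet hm t hc)
            rw [Set.indicator_of_notMem hnot, if_neg (fun hc => hup ⟨hxI, hc⟩)]
        · right; exact hxI
      · apply measure_union_null
        · rw [Measure.restrict_apply (measurableSet_singleton s)]
          exact measure_mono_null (inter_subset_left) (measure_singleton s)
        · rw [Measure.restrict_apply (measurableSet_Ioo.compl)]
          simp
    rw [Filter.eventually_iff, mem_ae_iff]
    exact hnull
  rw [integral_congr_ae key, setIntegral_indicator measurableSet_Ioo]
  congr 1
  rw [Set.Ioo_inter_Ioo, max_eq_right hs01.1, min_self]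




lemma layer {ξ φ : ℝ → ℝ} (hi : IntegrableOn ξ (Set.Ioo 0 1) volume)
    (hφm : AEStronglyMeasurable φ (volume.restrict (Set.Ioo 0 1)))
    {A B : ℝ} (hAB : A ≤ B) :
    ((∫ x in Set.Ioo (0:ℝ) 1, ξ x * clampf A B φ x) =
      A * (∫ x in Set.Ioo (0:ℝ) 1, ξ x) +
        ∫ t in Set.Ioo A B, (∫ x in Set.Ioo (0:ℝ) 1, if t < clampf A B φ x then ξ x else 0)) ∧
    Integrable (fun t => ∫ x in Set.Ioo (0:ℝ) 1, if t < clampf A B φ x then ξ x else 0)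
      (volume.restrict (Set.Ioo A B)) := by
  set μ := volume.restrict (Set.Ioo (0:ℝ) 1) with hμ
  set ν := volume.restrict (Set.Ioo A B) with hν
  haveI : IsFiniteMeasure ν := ⟨by
    rw [hν, Measure.restrict_apply_univ, Real.volume_Ioo]; exact ENNReal.ofReal_lt_top⟩
  haveI : IsFiniteMeasure μ := ⟨by
    rw [hμ, Measure.restrict_apply_univ, Real.volume_Ioo]; exact ENNReal.ofReal_lt_top⟩
  have hξm : AEStronglyMeasurable ξ μ := hi.aestronglyMeasurable
  obtain ⟨ξ', hξ'sm, hξ'e⟩ := hξm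
  obtain ⟨φ', hφ'sm, hφ'e⟩ := hφm
  set G : ℝ × ℝ → ℝ := fun p => if p.2 < clampf A B φ p.1 then ξ p.1 else 0 with hG
  set F : ℝ × ℝ → ℝ := fun p => if p.2 < clampf A B φ' p.1 then ξ' p.1 else 0 with hF
  have hclamp' : Measurable (fun x => clampf A B φ' x) :=
    measurable_const.max (measurable_const.min hφ'sm.measurable)
  have hFmeas : StronglyMeasurable F := by
    apply Measurable.stronglyMeasurable
    exact Measurable.ite (measurableSet_lt measurable_snd (hclamp'.comp measurable_fst))
      (hξ'sm.measurable.comp measurable_fst) measurable_const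
  -- F = G a.e. wrt product
  have hFG : F =ᵐ[μ.prod ν] G := by
    have hD : μ ({x | ¬ ξ x = ξ' x} ∪ {x | ¬ φ x = φ' x}) = 0 :=
      measure_union_null (ae_iff.1 hξ'e) (ae_iff.1 hφ'e)
    have hsub : {p : ℝ × ℝ | ¬ F p = G p} ⊆
        (({x | ¬ ξ x = ξ' x} ∪ {x | ¬ φ x = φ' x}) ×ˢ (univ : Set ℝ)) := by
      intro p hp
      simp only [mem_setOf_eq] at hp
      constructor
      · by_contra hx
        simp only [mem_union, mem_setOf_eq, not_or, not_not] at hx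
        apply hp
        rw [hF, hG]
        simp only [clampf, ← hx.1, ← hx.2]
        rfl
      · trivial
    have : (μ.prod ν) (({x | ¬ ξ x = ξ' x} ∪ {x | ¬ φ x = φ' x}) ×ˢ (univ : Set ℝ)) = 0 := by
      rw [Measure.prod_prod, hD, zero_mul]
    rw [Filter.EventuallyEq, ae_iff]
    exact measure_mono_null hsub this
  -- integrability of F on the product
  have hξint : Integrable ξ μ := hi
  have hξ'int : Integrable ξ' μ := hξint.congr hξ'e
  have hFint : Integrable F (μ.prod ν) := by
    refine (integrable_prod_iff hFmeas.aestronglyMeasurable).2 ⟨?_, ?_⟩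
    · refine Eventually.of_forall (fun x => ?_)
      refine Integrable.mono' (integrable_const ‖ξ' x‖)
        ((hFmeas.comp_measurable (measurable_prodMk_left)).aestronglyMeasurable)
        (Eventually.of_forall (fun t => ?_))
      simp only [hF]
      beta_reduce
      split_ifs <;> simp [norm_nonneg]
    · refine Integrable.mono' ((hξ'int.norm).mul_const (B - A))
        ((hFmeas.norm.integral_prod_right').aestronglyMeasurable)
        (Eventually.of_forall (fun x => ?_))
      have hb : ∀ t : ℝ, ‖‖F (x, t)‖‖ ≤ ‖ξ' x‖ := by
        intro t
        rw [norm_norm, hF]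
        beta_reduce
        split_ifs <;> simp [norm_nonneg]
      have := norm_integral_le_of_norm_le_const (μ := ν) (C := ‖ξ' x‖)
        (Eventually.of_forall hb)
      calc ‖∫ t, ‖F (x, t)‖ ∂ν‖ ≤ ‖ξ' x‖ * (ν univ).toReal := this
        _ ≤ ‖ξ' x‖ * (B - A) := by
            apply mul_le_mul_of_nonneg_left _ (norm_nonneg _)
            rw [hν, Measure.restrict_apply_univ, Real.volume_Ioo,
              ENNReal.toReal_ofReal (sub_nonneg.2 hAB)]
  have hGint : Integrable G (μ.prod ν) := hFint.congr hFG
  -- pointwise layer-cake identity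
  have eq1 : ∀ x : ℝ, ξ x * clampf A B φ x = ξ x * A + ∫ t in Set.Ioo A B, G (x, t) := by
    intro x
    set c := clampf A B φ x with hc
    have hcA : A ≤ c := le_max_left _ _
    have hcB : c ≤ B := max_le hAB (min_le_left _ _)
    have : (fun t => G (x, t)) = (Set.Iio c).indicator (fun _ => ξ x) := by
      funext t
      simp only [hG, Set.indicator, mem_Iio, hc]
    rw [this, setIntegral_indicator measurableSet_Iio, setIntegral_const,
      Set.Ioo_inter_Iio, min_eq_right hcB, Real.volume_real_Ioo_of_le hcA]
    simp only [smul_eq_mul]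
    ring
  -- assemble
  have hswap : ∫ x, (∫ t, G (x, t) ∂ν) ∂μ = ∫ t, (∫ x, G (x, t) ∂μ) ∂ν := by
    have huc : uncurry (fun x t => G (x, t)) = G := by
      funext p
      rfl
    have := integral_integral_swap (f := fun x t => G (x, t)) (μ := μ) (ν := ν)
      (by rwa [huc])
    exact this
  constructor
  · calc (∫ x in Set.Ioo (0:ℝ) 1, ξ x * clampf A B φ x)
        = ∫ x, (ξ x * A + ∫ t, G (x, t) ∂ν) ∂μ := by
          apply integral_congr_ae (Eventually.of_forall (fun x => eq1 x))
      _ = (∫ x, ξ x * A ∂μ) + ∫ x, (∫ t, G (x, t) ∂ν) ∂μ := by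
          apply integral_add (hξint.mul_const A) hGint.integral_prod_left
      _ = A * (∫ x in Set.Ioo (0:ℝ) 1, ξ x) +
          ∫ t in Set.Ioo A B, (∫ x in Set.Ioo (0:ℝ) 1, if t < clampf A B φ x then ξ x else 0) := by
          rw [integral_mul_const, hswap]
          rw [mul_comm]
  · exact hGint.integral_prod_right


lemma integral_clamp {ξ φ : ℝ → ℝ} (hi : IntegrableOn ξ (Set.Ioo 0 1) volume)
    (hφm : AEStronglyMeasurable φ (volume.restrict (Set.Ioo 0 1)))
    (hmon : MonotoneOn φ (Set.Ioo 0 1)) {A B : ℝ} (hAB : A ≤ B) :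
    ((∫ x in Set.Ioo (0:ℝ) 1, ξ x * clampf A B φ x) =
      A * (∫ x in Set.Ioo (0:ℝ) 1, ξ x) +
        ∫ t in Set.Ioo A B,
          ((∫ s in (0:ℝ)..1, ξ s) - ∫ s in (0:ℝ)..(sInfLev (clampf A B φ) t), ξ s)) ∧
    Integrable
      (fun t => (∫ s in (0:ℝ)..1, ξ s) - ∫ s in (0:ℝ)..(sInfLev (clampf A B φ) t), ξ s)
      (volume.restrict (Set.Ioo A B)) := by
  obtain ⟨heq, hint⟩ := layer hi hφm hAB
  have hpt : (fun t => ∫ x in Set.Ioo (0:ℝ) 1, if t < clampf A B φ x then ξ x else 0)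
      = fun t => (∫ s in (0:ℝ)..1, ξ s) - ∫ s in (0:ℝ)..(sInfLev (clampf A B φ) t), ξ s := by
    funext t
    rw [psi_eq (clampf_mono hmon A B) t]
    have hm := sInfLev_mem (clampf A B φ) t
    exact Xi_diff hi hm.1 hm.2 le_rfl
  rw [hpt] at heq hint
  exact ⟨heq, hint⟩

lemma const_on {g : ℝ → ℝ} (hmon : MonotoneOn g (Set.Ioo 0 1)) {a b c : ℝ}
    (hae : ∀ᵐ x ∂μ01, x ∈ Set.Ioo a b → g x = c) :
    ∀ x ∈ Set.Ioo (max a 0) (min b 1), g x = c := by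
  have key : ∀ u v : ℝ, max a 0 ≤ u → u < v → v ≤ min b 1 → ∃ y ∈ Set.Ioo u v, g y = c := by
    intro u v hu huv hv
    by_contra hno
    push_neg at hno
    have hsub : Set.Ioo u v ⊆ {x | ¬(x ∈ Set.Ioo a b → g x = c)} := by
      intro y hy
      simp only [mem_setOf_eq, Classical.not_imp]
      exact ⟨⟨lt_of_le_of_lt (le_trans (le_max_left a 0) hu) hy.1,
        lt_of_lt_of_le hy.2 (le_trans hv (min_le_left b 1))⟩, hno y hy⟩
    have h0 : μ01 {x | ¬(x ∈ Set.Ioo a b → g x = c)} = 0 := ae_iff.1 hae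
    have hmz : μ01 (Set.Ioo u v) = 0 := measure_mono_null hsub h0
    rw [μ01, Measure.restrict_apply measurableSet_Ioo] at hmz
    have hss : Set.Ioo u v ∩ Set.Ioo 0 1 = Set.Ioo u v :=
      inter_eq_self_of_subset_left (fun y hy =>
        ⟨lt_of_le_of_lt (le_trans (le_max_right a 0) hu) hy.1,
         lt_of_lt_of_le hy.2 (le_trans hv (min_le_right b 1))⟩)
    rw [hss, Real.volume_Ioo] at hmz
    have := ENNReal.ofReal_eq_zero.1 hmz
    linarith
  intro x hx
  obtain ⟨y, hy, hyc⟩ := key (max a 0) x le_rfl hx.1 hx.2.le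
  obtain ⟨y', hy', hy'c⟩ := key x (min b 1) hx.1.le hx.2 le_rfl
  have hxI : x ∈ Set.Ioo (0:ℝ) 1 :=
    ⟨lt_of_le_of_lt (le_max_right a 0) hx.1, lt_of_lt_of_le hx.2 (min_le_right b 1)⟩
  have hyI : y ∈ Set.Ioo (0:ℝ) 1 :=
    ⟨lt_of_le_of_lt (le_max_right a 0) hy.1,
     lt_of_lt_of_le (hy.2.trans hx.2) (min_le_right b 1)⟩
  have hy'I : y' ∈ Set.Ioo (0:ℝ) 1 :=
    ⟨lt_trans hxI.1 hy'.1, lt_of_lt_of_le hy'.2 (min_le_right b 1)⟩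
  have h1 := hmon hyI hxI hy.2.le
  have h2 := hmon hxI hy'I hy'.1.le
  rw [hyc] at h1
  rw [hy'c] at h2
  linarith

lemma le_sInfLev {φ : ℝ → ℝ} (hmon : MonotoneOn φ (Set.Ioo 0 1)) {t u : ℝ}
    (hu : u ∈ Set.Ioo (0:ℝ) 1) (hut : φ u ≤ t) : u ≤ sInfLev φ t := by
  apply le_csInf (insert_nonempty _ _)
  intro y hy
  rcases hy with h | h
  · exact h ▸ hu.2.le
  · by_contra hc
    push_neg at hc
    exact absurd (h.2.trans_le (hmon h.1 hu hc.le)) (not_lt.2 hut)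

lemma sInfLev_le {φ : ℝ → ℝ} {t v : ℝ} (hv : v ∈ Set.Ioo (0:ℝ) 1) (htv : t < φ v) :
    sInfLev φ t ≤ v := csInf_le (upSet_bddBelow φ t) (mem_insert_of_mem _ ⟨hv, htv⟩)

lemma sInfLev_not_locConst {g : ℝ → ℝ} (hmon : MonotoneOn g (Set.Ioo 0 1))
    (A B t : ℝ) : sInfLev (clampf A B g) t ∉ locConstSet g := by
  intro hmem
  set s := sInfLev (clampf A B g) t with hsdef
  obtain ⟨hsI, a, b, c, has, hsb, hae⟩ := hmem
  have hconst := const_on hmon hae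
  set a' := max a 0 with ha'
  set b' := min b 1 with hb'
  have ha's : a' < s := max_lt has hsI.1
  have hsb' : s < b' := lt_min hsb hsI.2
  have ha'b' : a' < b' := ha's.trans hsb'
  have hsub : Set.Ioo a' b' ⊆ Set.Ioo (0:ℝ) 1 := fun y hy =>
    ⟨lt_of_le_of_lt (le_max_right a 0) hy.1, lt_of_lt_of_le hy.2 (min_le_right b 1)⟩
  have hcc : ∀ x ∈ Set.Ioo a' b', clampf A B g x = max A (min B c) := by
    intro x hx
    rw [clampf, hconst x hx]
  rcases lt_or_ge t (max A (min B c)) with hlt | hle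
  · set x := (a' + s)/2 with hx0
    have hx : x ∈ Set.Ioo a' s := ⟨by rw [hx0]; linarith, by rw [hx0]; linarith⟩
    have hx' : x ∈ Set.Ioo a' b' := ⟨hx.1, hx.2.trans hsb'⟩
    have hsx : s ≤ x := sInfLev_le (hsub hx') (by rw [hcc x hx']; exact hlt)
    exact absurd hsx (not_le.2 hx.2)
  · have hlb : ∀ y ∈ insert 1 (upSet (clampf A B g) t), b' ≤ y := by
      intro y hy
      rcases hy with h | h
      · rw [h]; exact min_le_right b 1
      · by_contra hc
        push_neg at hc
        set x := (max y a' + b')/2 with hx0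
        have hmax : max y a' < b' := max_lt hc ha'b'
        have hx1 : max y a' < x := by rw [hx0]; linarith
        have hx2 : x < b' := by rw [hx0]; linarith
        have hx' : x ∈ Set.Ioo a' b' := ⟨lt_of_le_of_lt (le_max_right y a') hx1, hx2⟩
        have hyx : y < x := lt_of_le_of_lt (le_max_left y a') hx1
        have hmono := clampf_mono hmon A B h.1 (hsub hx') hyx.le
        rw [hcc x hx'] at hmono
        exact absurd (h.2.trans_le hmono) (not_lt.2 hle)
    have : b' ≤ s := le_csInf (insert_nonempty _ _) hlb
    exact absurd hsb' (not_lt.2 this)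

lemma aesm_max {f h : ℝ → ℝ} {μ : Measure ℝ} (hf : AEStronglyMeasurable f μ)
    (hh : AEStronglyMeasurable h μ) : AEStronglyMeasurable (fun x => max (f x) (h x)) μ := by
  rw [aestronglyMeasurable_iff_aemeasurable] at *
  exact hf.max hh

lemma aesm_min {f h : ℝ → ℝ} {μ : Measure ℝ} (hf : AEStronglyMeasurable f μ)
    (hh : AEStronglyMeasurable h μ) : AEStronglyMeasurable (fun x => min (f x) (h x)) μ := by
  rw [aestronglyMeasurable_iff_aemeasurable] at *
  exact hf.min hh

lemma aesm_clampf {φ : ℝ → ℝ} {μ : Measure ℝ} (hφ : AEStronglyMeasurable φ μ) (A B : ℝ) :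
    AEStronglyMeasurable (clampf A B φ) μ :=
  aesm_max aestronglyMeasurable_const (aesm_min aestronglyMeasurable_const hφ)

lemma mem2_of_abs_le {f g₁ : ℝ → ℝ} (hf : AEStronglyMeasurable f μ01)
    (hg : MeasureTheory.MemLp g₁ 2 μ01) {c : ℝ} (hb : ∀ x, |f x| ≤ |g₁ x| + c) :
    MeasureTheory.MemLp f 2 μ01 := by
  have hn := hg.norm
  simp only [Real.norm_eq_abs] at hn
  have hdom : MeasureTheory.MemLp (fun x => |g₁ x| + c) 2 μ01 := hn.add (memLp_const c)
  apply hdom.of_le hf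
  apply Eventually.of_forall
  intro x
  rw [Real.norm_eq_abs, Real.norm_eq_abs]
  exact (hb x).trans (le_abs_self _)

lemma abs_clamp_le {a b y : ℝ} (ha : a ≤ 0) (hb : 0 ≤ b) : |max a (min b y)| ≤ |y| := by
  rcases le_total y a with h | h
  · rw [min_eq_right (h.trans (ha.trans hb)), max_eq_left h, abs_of_nonpos ha,
      abs_of_nonpos (h.trans ha)]
    linarith
  · rcases le_total y b with h' | h'
    · rw [min_eq_right h', max_eq_right h]
    · rw [min_eq_left h', max_eq_right (ha.trans hb), abs_of_nonneg hb,
        abs_of_nonneg (hb.trans h')]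
      linarith

end Stmt9Aux

theorem stmt9 (g ξ Ξ : ℝ → ℝ) (hg : g ∈ coneK) (hξ : MeasureTheory.MemLp ξ 2 μ01)
    (hΞ : ∀ w, Ξ w = ∫ s in (0:ℝ)..w, ξ s) :
    subdiffIK g ξ ↔
      ((∀ w ∈ Set.Icc (0:ℝ) 1, 0 ≤ Ξ w) ∧ Ξ 0 = 0 ∧ Ξ 1 = 0 ∧
        ∀ w ∈ Set.Icc (0:ℝ) 1, w ∉ locConstSet g → Ξ w = 0) := by
  obtain ⟨hgmon, hgmem⟩ := hg
  have hi : IntegrableOn ξ (Set.Ioo 0 1) volume := Stmt9Aux.integrableOn_of_mem2 hξ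
  have hΞ0 : Ξ 0 = 0 := by rw [hΞ]; exact intervalIntegral.integral_same
  have hIoo_eq : (∫ x in Set.Ioo (0:ℝ) 1, ξ x) = ∫ s in (0:ℝ)..1, ξ s := by
    rw [intervalIntegral.integral_of_le zero_le_one, integral_Ioc_eq_integral_Ioo]
  constructor
  · rintro ⟨-, hsub⟩
    -- ∫ ξ = 0
    have hint0 : (∫ x in Set.Ioo (0:ℝ) 1, ξ x) = 0 := by
      have h1 : (fun x => g x + 1) ∈ coneK :=
        ⟨fun x hx y hy hxy => by have := hgmon hx hy hxy; dsimp only; linarith,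
         hgmem.add (memLp_const 1)⟩
      have h2 : (fun x => g x - 1) ∈ coneK :=
        ⟨fun x hx y hy hxy => by have := hgmon hx hy hxy; dsimp only; linarith,
         hgmem.sub (memLp_const 1)⟩
      have e1 := hsub _ h1
      have e2 := hsub _ h2
      simp only [add_sub_cancel_left, mul_one, sub_sub_cancel_left, mul_neg_one,
        integral_neg] at e1 e2
      linarith
    have hΞ1 : Ξ 1 = 0 := by rw [hΞ, ← hIoo_eq]; exact hint0
    -- Ξ ≥ 0
    have hΞpos : ∀ w ∈ Set.Icc (0:ℝ) 1, 0 ≤ Ξ w := by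
      intro w hw
      have hstep : (fun x => g x + if w ≤ x then (1:ℝ) else 0) ∈ coneK := by
        constructor
        · intro x hx y hy hxy
          have h1 := hgmon hx hy hxy
          have h2 : (if w ≤ x then (1:ℝ) else 0) ≤ (if w ≤ y then (1:ℝ) else 0) := by
            split_ifs with hwx hwy
            · exact le_rfl
            · exact absurd (hwx.trans hxy) hwy
            · norm_num
            · exact le_rfl
          dsimp only
          linarith
        · apply hgmem.add
          have hind : (fun x => if w ≤ x then (1:ℝ) else 0) =
              Set.indicator (Set.Ici w) (fun _ => 1) := by
            funext x
            simp [Set.indicator, mem_Ici]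
          apply MemLp.of_bound ?_ 1 ?_
          · rw [hind]
            exact (measurable_const.indicator measurableSet_Ici).aestronglyMeasurable
          · apply Eventually.of_forall
            intro x
            split_ifs <;> simp
      have e := hsub _ hstep
      have key : (∫ x in Set.Ioo (0:ℝ) 1,
          ξ x * ((fun x => g x + if w ≤ x then (1:ℝ) else 0) x - g x)) = Ξ 1 - Ξ w := by
        have h1 : (fun x => ξ x * ((fun x => g x + if w ≤ x then (1:ℝ) else 0) x - g x)) =
            Set.indicator (Set.Ici w) ξ := by
          funext x
          simp only [Set.indicator, mem_Ici, add_sub_cancel_left]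
          split_ifs <;> ring
        rw [h1, setIntegral_indicator measurableSet_Ici]
        have h2 : (Set.Ioo (0:ℝ) 1 ∩ Set.Ici w : Set ℝ) =ᵐ[volume] (Set.Ioo w 1 : Set ℝ) := by
          rw [ae_eq_set]
          constructor
          · apply measure_mono_null (t := {w}) _ (measure_singleton w)
            intro x hx
            have h3 : ¬ w < x := fun hc => hx.2 ⟨hc, hx.1.1.2⟩
            have : x = w := le_antisymm (not_lt.1 h3) hx.1.2
            simp [this]
          · apply measure_mono_null (t := (∅ : Set ℝ)) _ (by simp)
            intro x hx
            exact absurd ⟨⟨lt_of_le_of_lt hw.1 hx.1.1, hx.1.2⟩, hx.1.1.le⟩ hx.2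
        rw [setIntegral_congr_set h2, Stmt9Aux.Xi_diff hi hw.1 hw.2 le_rfl, hΞ, hΞ]
      rw [key, hΞ1] at e
      linarith
    -- ∫ ξ g = 0
    have hξg : (∫ x in Set.Ioo (0:ℝ) 1, ξ x * g x) = 0 := by
      have h1 : (fun x => g x + g x) ∈ coneK :=
        ⟨fun x hx y hy hxy => by have := hgmon hx hy hxy; dsimp only; linarith,
         hgmem.add hgmem⟩
      have h2 : (fun _ : ℝ => (0:ℝ)) ∈ coneK := ⟨monotoneOn_const, memLp_const 0⟩
      have e1 := hsub _ h1
      have e2 := hsub _ h2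
      simp only [add_sub_cancel_right, zero_sub, mul_neg, integral_neg] at e1 e2
      linarith
    -- ∫ ξ * clamp g = 0
    have hclamp0 : ∀ A B : ℝ, A ≤ B →
        (∫ x in Set.Ioo (0:ℝ) 1, ξ x * Stmt9Aux.clampf A B g x) = 0 := by
      intro A B hAB
      set u : ℝ → ℝ := fun x => max (g x - B) 0 with hu
      set v : ℝ → ℝ := fun x => max (A - g x) 0 with hv
      have humem : MeasureTheory.MemLp u 2 μ01 := by
        apply Stmt9Aux.mem2_of_abs_le (g₁ := g) (c := |B|) _ hgmem
        · intro x
          rcases le_total (g x - B) 0 with h | h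
          · rw [hu]; simp only [max_eq_right h, abs_zero]; positivity
          · rw [hu]; simp only [max_eq_left h]
            rw [abs_of_nonneg h]
            have := le_abs_self (g x)
            have := neg_abs_le B
            linarith [le_abs_self B, neg_le_abs B]
        · exact Stmt9Aux.aesm_max (hgmem.1.sub aestronglyMeasurable_const)
            aestronglyMeasurable_const
      have hvmem : MeasureTheory.MemLp v 2 μ01 := by
        apply Stmt9Aux.mem2_of_abs_le (g₁ := g) (c := |A|) _ hgmem
        · intro x
          rcases le_total (A - g x) 0 with h | h
          · rw [hv]; simp only [max_eq_right h, abs_zero]; positivity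
          · rw [hv]; simp only [max_eq_left h]
            rw [abs_of_nonneg h]
            linarith [neg_abs_le (g x), le_abs_self A]
        · exact Stmt9Aux.aesm_max (aestronglyMeasurable_const.sub hgmem.1)
            aestronglyMeasurable_const
      have hiu : Integrable (fun x => ξ x * u x) μ01 := Stmt9Aux.integrable_mul2 hξ humem
      have hiv : Integrable (fun x => ξ x * v x) μ01 := Stmt9Aux.integrable_mul2 hξ hvmem
      have hig : Integrable (fun x => ξ x * g x) μ01 := Stmt9Aux.integrable_mul2 hξ hgmem
      -- z1 = g + u
      have hz1 : (fun x => g x + u x) ∈ coneK := by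
        constructor
        · intro x hx y hy hxy
          have h1 := hgmon hx hy hxy
          have h2 : u x ≤ u y := max_le_max (by linarith) le_rfl
          dsimp only
          linarith
        · exact hgmem.add humem
      -- z2 = min g B = g - u
      have hz2 : (fun x => min (g x) B) ∈ coneK := by
        constructor
        · exact fun x hx y hy hxy => min_le_min (hgmon hx hy hxy) le_rfl
        · apply Stmt9Aux.mem2_of_abs_le (g₁ := g) (c := |B|)
            (Stmt9Aux.aesm_min hgmem.1 aestronglyMeasurable_const) hgmem
          intro x
          rcases le_total (g x) B with h | h
          · rw [min_eq_left h]; linarith [le_abs_self B, abs_nonneg B]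
          · rw [min_eq_right h]
            have : |B| ≤ |g x| + |B| - 0 := by linarith [abs_nonneg (g x)]
            calc |B| ≤ |g x| + |B| := by linarith [abs_nonneg (g x)]
              _ = _ := rfl
      -- z3 = max g A = g + v
      have hz3 : (fun x => max (g x) A) ∈ coneK := by
        constructor
        · exact fun x hx y hy hxy => max_le_max (hgmon hx hy hxy) le_rfl
        · apply Stmt9Aux.mem2_of_abs_le (g₁ := g) (c := |A|)
            (Stmt9Aux.aesm_max hgmem.1 aestronglyMeasurable_const) hgmem
          intro x
          rcases le_total (g x) A with h | h
          · rw [max_eq_right h]; linarith [abs_nonneg (g x), le_abs_self A]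
          · rw [max_eq_left h]; linarith [le_abs_self (g x), abs_nonneg A, abs_nonneg (g x)]
      -- z4 = min g (2g - A) = g - v
      have hz4 : (fun x => min (g x) (2 * g x - A)) ∈ coneK := by
        constructor
        · intro x hx y hy hxy
          have h1 := hgmon hx hy hxy
          exact min_le_min h1 (by linarith)
        · have hmes : AEStronglyMeasurable (fun x => min (g x) (2 * g x - A)) μ01 := by
            apply Stmt9Aux.aesm_min hgmem.1
            exact (hgmem.1.const_mul 2).sub aestronglyMeasurable_const
          apply Stmt9Aux.mem2_of_abs_le (g₁ := fun x => 2 * g x) (c := |A|) hmes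
            (hgmem.const_mul 2)
          intro x
          have habs : |2 * g x| = 2 * |g x| := by rw [abs_mul]; norm_num
          rcases le_total (g x) (2 * g x - A) with h | h
          · rw [min_eq_left h, habs]
            have := abs_nonneg (g x)
            have := abs_nonneg A
            have := le_abs_self (g x)
            have := neg_abs_le (g x)
            linarith
          · rw [min_eq_right h]
            calc |2 * g x - A| ≤ |2 * g x| + |A| := abs_sub (2 * g x) A
              _ = _ := rfl
      -- inequalities
      have e1 := hsub _ hz1
      have e2 := hsub _ hz2
      have e3 := hsub _ hz3
      have e4 := hsub _ hz4
      have r1 : (fun x => ξ x * ((fun x => g x + u x) x - g x)) = fun x => ξ x * u x := by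
        funext x; dsimp only; ring
      have r2 : (fun x => ξ x * ((fun x => min (g x) B) x - g x)) =
          fun x => -(ξ x * u x) := by
        funext x
        dsimp only
        rcases le_total (g x) B with h | h
        · rw [min_eq_left h, hu]
          simp only [max_eq_right (by linarith : g x - B ≤ 0)]
          ring
        · rw [min_eq_right h, hu]
          simp only [max_eq_left (by linarith : (0:ℝ) ≤ g x - B)]
          ring
      have r3 : (fun x => ξ x * ((fun x => max (g x) A) x - g x)) = fun x => ξ x * v x := by
        funext x
        dsimp only
        rcases le_total (g x) A with h | h
        · rw [max_eq_right h, hv]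
          simp only [max_eq_left (by linarith : (0:ℝ) ≤ A - g x)]
        · rw [max_eq_left h, hv]
          simp only [max_eq_right (by linarith : A - g x ≤ 0)]
          ring
      have r4 : (fun x => ξ x * ((fun x => min (g x) (2 * g x - A)) x - g x)) =
          fun x => -(ξ x * v x) := by
        funext x
        dsimp only
        rcases le_total (g x) A with h | h
        · rw [min_eq_right (by linarith), hv]
          simp only [max_eq_left (by linarith : (0:ℝ) ≤ A - g x)]
          ring
        · rw [min_eq_left (by linarith), hv]
          simp only [max_eq_right (by linarith : A - g x ≤ 0)]
          ring
      rw [r1] at e1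
      rw [r2, integral_neg] at e2
      rw [r3] at e3
      rw [r4, integral_neg] at e4
      have hu0 : (∫ x in Set.Ioo (0:ℝ) 1, ξ x * u x) = 0 := le_antisymm e1 (by linarith)
      have hv0 : (∫ x in Set.Ioo (0:ℝ) 1, ξ x * v x) = 0 := le_antisymm e3 (by linarith)
      -- clamp identity
      have hid : (fun x => ξ x * Stmt9Aux.clampf A B g x) =
          fun x => ξ x * g x + ξ x * v x - ξ x * u x := by
        funext x
        have : Stmt9Aux.clampf A B g x = g x + v x - u x := by
          simp only [Stmt9Aux.clampf, hu, hv]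
          rcases le_total (g x) A with h | h
          · rw [min_eq_right (h.trans hAB), max_eq_left h,
              max_eq_left (by linarith : (0:ℝ) ≤ A - g x),
              max_eq_right (by linarith : g x - B ≤ 0)]
            ring
          · rcases le_total (g x) B with h' | h'
            · rw [min_eq_right h', max_eq_right h,
                max_eq_right (by linarith : A - g x ≤ 0),
                max_eq_right (by linarith : g x - B ≤ 0)]
              ring
            · rw [min_eq_left h', max_eq_right hAB,
                max_eq_right (by linarith : A - g x ≤ 0),
                max_eq_left (by linarith : (0:ℝ) ≤ g x - B)]
              ring
        rw [this]
        ring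
      have hs2 := integral_sub (μ := volume.restrict (Set.Ioo (0:ℝ) 1))
        (f := fun x => ξ x * g x + ξ x * v x) (g := fun x => ξ x * u x)
        (by exact hig.add hiv) (by exact hiu)
      beta_reduce at hs2
      have hs3 := integral_add (μ := volume.restrict (Set.Ioo (0:ℝ) 1))
        (f := fun x => ξ x * g x) (g := fun x => ξ x * v x)
        (by exact hig) (by exact hiv)
      beta_reduce at hs3
      rw [hid, hs2, hs3, hξg, hu0, hv0]
      ring
    refine ⟨hΞpos, hΞ0, hΞ1, ?_⟩
    -- vanishing off the locally-constant set
    intro w hw hwnot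
    rcases eq_or_lt_of_le hw.1 with h0 | hw0
    · rw [← h0]; exact hΞ0
    rcases eq_or_lt_of_le hw.2 with h1 | hw1
    · rw [h1]; exact hΞ1
    by_contra hne
    have hΞw : 0 < Ξ w := lt_of_le_of_ne (hΞpos w hw) (Ne.symm hne)
    have hcont : ContinuousOn (fun y => ∫ s in (0:ℝ)..y, ξ s) (Set.Icc 0 1) :=
      Stmt9Aux.Xi_cont hi
    have hca : ContinuousAt (fun y => ∫ s in (0:ℝ)..y, ξ s) w :=
      hcont.continuousAt (Icc_mem_nhds hw0 hw1)
    have hev : ∀ᶠ y in nhds w, (0 < ∫ s in (0:ℝ)..y, ξ s) ∧ y ∈ Set.Ioo (0:ℝ) 1 := by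
      apply Eventually.and
      · exact hca (isOpen_Ioi.mem_nhds (show (∫ s in (0:ℝ)..w, ξ s) ∈ Set.Ioi 0 by
          rw [← hΞ w]; exact hΞw))
      · exact isOpen_Ioo.mem_nhds ⟨hw0, hw1⟩
    obtain ⟨δ, hδpos, hδ⟩ := Metric.eventually_nhds_iff.1 hev
    set a := w - δ/2 with hadef
    set b := w + δ/2 with hbdef
    have hab : ∀ y ∈ Set.Icc a b, 0 < Ξ y ∧ y ∈ Set.Ioo (0:ℝ) 1 := by
      intro y hy
      have hdist : dist y w < δ := by
        rw [Real.dist_eq, abs_lt]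
        constructor
        · have := hy.1; rw [hadef] at this; linarith
        · have := hy.2; rw [hbdef] at this; linarith
      have h := hδ hdist
      exact ⟨by rw [hΞ]; exact h.1, h.2⟩
    have hnc : ∃ u' v' : ℝ, a < u' ∧ u' < v' ∧ v' < b ∧ g u' < g v' := by
      by_contra hno
      push_neg at hno
      apply hwnot
      refine ⟨⟨hw0, hw1⟩, a, b, g w, by rw [hadef]; linarith, by rw [hbdef]; linarith, ?_⟩
      have hmem : ∀ᵐ x ∂μ01, x ∈ Set.Ioo (0:ℝ) 1 := ae_restrict_mem measurableSet_Ioo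
      filter_upwards [hmem] with x hxI hxab
      have hwI : w ∈ Set.Ioo (0:ℝ) 1 := ⟨hw0, hw1⟩
      have hwab : a < w ∧ w < b := ⟨by rw [hadef]; linarith, by rw [hbdef]; linarith⟩
      rcases lt_trichotomy x w with h | h | h
      · have hle := hgmon hxI hwI h.le
        have hge := hno x w hxab.1 h hwab.2
        linarith
      · rw [h]
      · have hle := hgmon hwI hxI h.le
        have hge := hno w x hwab.1 h hxab.2
        linarith
    obtain ⟨u', v', hau, huv, hvb, hguv⟩ := hnc
    have hu'I : u' ∈ Set.Ioo (0:ℝ) 1 :=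
      (hab u' ⟨hau.le, by linarith⟩).2
    have hv'I : v' ∈ Set.Ioo (0:ℝ) 1 :=
      (hab v' ⟨by linarith, hvb.le⟩).2
    have hAB : g u' ≤ g v' := hguv.le
    obtain ⟨heq, hint⟩ := Stmt9Aux.integral_clamp hi hgmem.1 hgmon hAB
    rw [hclamp0 _ _ hAB, hint0, mul_zero, zero_add] at heq
    have hP1 : (∫ s in (0:ℝ)..1, ξ s) = 0 := by rw [← hΞ 1]; exact hΞ1
    rw [hP1] at heq hint
    simp only [zero_sub] at heq hint
    rw [integral_neg] at heq
    set Q : ℝ → ℝ := fun t =>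
      ∫ s in (0:ℝ)..(Stmt9Aux.sInfLev (Stmt9Aux.clampf (g u') (g v') g) t), ξ s with hQ
    have hQint : Integrable Q (volume.restrict (Set.Ioo (g u') (g v'))) := by
      apply hint.neg.congr
      apply Eventually.of_forall
      intro t
      simp [hQ]
    have hQnn : 0 ≤ᵐ[volume.restrict (Set.Ioo (g u') (g v'))] Q := by
      apply Eventually.of_forall
      intro t
      have := hΞpos _ (Stmt9Aux.sInfLev_mem (Stmt9Aux.clampf (g u') (g v') g) t)
      rw [hΞ] at this
      exact this
    have hQ0 : ∫ t in Set.Ioo (g u') (g v'), Q t = 0 := by linarith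
    have hQae := (integral_eq_zero_iff_of_nonneg_ae hQnn hQint).1 hQ0
    haveI : (ae (volume.restrict (Set.Ioo (g u') (g v')))).NeBot := by
      apply ae_neBot.2
      intro hcon
      rw [Measure.restrict_eq_zero, Real.volume_Ioo] at hcon
      rw [ENNReal.ofReal_eq_zero] at hcon
      linarith
    obtain ⟨t, htQ, htI⟩ := (hQae.and (ae_restrict_mem measurableSet_Ioo)).exists
    set st := Stmt9Aux.sInfLev (Stmt9Aux.clampf (g u') (g v') g) t with hst
    have hust : u' ≤ st := by
      apply Stmt9Aux.le_sInfLev (Stmt9Aux.clampf_mono hgmon _ _) hu'I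
      rw [Stmt9Aux.clampf]
      rw [min_eq_right hAB, max_self]
      exact htI.1.le
    have hstv : st ≤ v' := by
      apply Stmt9Aux.sInfLev_le hv'I
      rw [Stmt9Aux.clampf]
      rw [min_self, max_eq_right hAB]
      exact htI.2
    have hstpos : 0 < Ξ st := (hab st ⟨by linarith, by linarith⟩).1
    rw [hΞ] at hstpos
    rw [Pi.zero_apply] at htQ
    rw [hQ] at htQ
    linarith [htQ, hstpos]
  · rintro ⟨hpos, h0, h1, hvan⟩
    refine ⟨⟨hgmon, hgmem⟩, ?_⟩
    intro z hz
    obtain ⟨hzmon, hzmem⟩ := hz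
    have hP1 : (∫ s in (0:ℝ)..1, ξ s) = 0 := by rw [← hΞ 1]; exact h1
    have hint01 : (∫ x in Set.Ioo (0:ℝ) 1, ξ x) = 0 := by rw [hIoo_eq]; exact hP1
    have key : ∀ (φ : ℝ → ℝ), MonotoneOn φ (Set.Ioo 0 1) →
        AEStronglyMeasurable φ μ01 → ∀ n : ℕ,
        (∫ x in Set.Ioo (0:ℝ) 1,
          ξ x * Stmt9Aux.clampf (-((n:ℝ)+1)) ((n:ℝ)+1) φ x) ≤ 0 := by
      intro φ hm hmeas n
      have hn0 : (0:ℝ) ≤ (n:ℝ) + 1 := by positivity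
      have hAB : (-((n:ℝ)+1)) ≤ ((n:ℝ)+1) := by linarith
      obtain ⟨heq, -⟩ := Stmt9Aux.integral_clamp hi hmeas hm hAB
      rw [heq, hint01, mul_zero, zero_add]
      apply integral_nonpos
      intro t
      have hm' := Stmt9Aux.sInfLev_mem (Stmt9Aux.clampf (-((n:ℝ)+1)) ((n:ℝ)+1) φ) t
      have hge := hpos _ hm'
      rw [hΞ] at hge
      simp only [Pi.zero_apply, hP1, zero_sub, neg_nonpos]
      exact hge
    have hlim : ∀ (φ : ℝ → ℝ), MeasureTheory.MemLp φ 2 μ01 →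
        Tendsto (fun n : ℕ => ∫ x in Set.Ioo (0:ℝ) 1,
            ξ x * Stmt9Aux.clampf (-((n:ℝ)+1)) ((n:ℝ)+1) φ x)
          atTop (nhds (∫ x in Set.Ioo (0:ℝ) 1, ξ x * φ x)) := by
      intro φ hφ
      apply tendsto_integral_of_dominated_convergence (bound := fun x => ‖ξ x * φ x‖)
      · intro n
        exact hξ.1.mul (Stmt9Aux.aesm_clampf hφ.1 _ _)
      · exact (Stmt9Aux.integrable_mul2 hξ hφ).norm
      · intro n
        apply Eventually.of_forall
        intro x
        beta_reduce
        rw [norm_mul, norm_mul]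
        apply mul_le_mul_of_nonneg_left _ (norm_nonneg _)
        rw [Real.norm_eq_abs, Real.norm_eq_abs]
        exact Stmt9Aux.abs_clamp_le (neg_nonpos.2 (by positivity)) (by positivity)
      · apply Eventually.of_forall
        intro x
        obtain ⟨N, hN⟩ := exists_nat_ge (|φ x|)
        apply tendsto_atTop_of_eventually_const (i₀ := N)
        intro n hn
        have h1 : φ x ≤ (n:ℝ) + 1 := by
          have : (N:ℝ) ≤ (n:ℝ) := Nat.cast_le.2 hn
          linarith [le_abs_self (φ x)]
        have h2 : (-((n:ℝ)+1)) ≤ φ x := by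
          have : (N:ℝ) ≤ (n:ℝ) := Nat.cast_le.2 hn
          linarith [neg_abs_le (φ x)]
        rw [Stmt9Aux.clampf, min_eq_right h1, max_eq_right h2]
    have hzle : (∫ x in Set.Ioo (0:ℝ) 1, ξ x * z x) ≤ 0 :=
      le_of_tendsto (hlim z hzmem) (Eventually.of_forall (key z hzmon hzmem.1))
    have hgeq : (∫ x in Set.Ioo (0:ℝ) 1, ξ x * g x) = 0 := by
      have keyg : ∀ n : ℕ, (∫ x in Set.Ioo (0:ℝ) 1,
          ξ x * Stmt9Aux.clampf (-((n:ℝ)+1)) ((n:ℝ)+1) g x) = 0 := by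
        intro n
        have hn0 : (0:ℝ) ≤ (n:ℝ) + 1 := by positivity
        have hAB : (-((n:ℝ)+1)) ≤ ((n:ℝ)+1) := by linarith
        obtain ⟨heq, -⟩ := Stmt9Aux.integral_clamp hi hgmem.1 hgmon hAB
        rw [heq, hint01, mul_zero, zero_add]
        have hz : ∀ t : ℝ, ((∫ s in (0:ℝ)..1, ξ s) -
            ∫ s in (0:ℝ)..(Stmt9Aux.sInfLev
              (Stmt9Aux.clampf (-((n:ℝ)+1)) ((n:ℝ)+1) g) t), ξ s) = 0 := by
          intro t
          rw [hP1, zero_sub, neg_eq_zero, ← hΞ]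
          exact hvan _ (Stmt9Aux.sInfLev_mem _ _) (Stmt9Aux.sInfLev_not_locConst hgmon _ _ _)
        calc (∫ t in Set.Ioo (-((n:ℝ)+1)) ((n:ℝ)+1), ((∫ s in (0:ℝ)..1, ξ s) -
            ∫ s in (0:ℝ)..(Stmt9Aux.sInfLev
              (Stmt9Aux.clampf (-((n:ℝ)+1)) ((n:ℝ)+1) g) t), ξ s))
            = ∫ t in Set.Ioo (-((n:ℝ)+1)) ((n:ℝ)+1), (0:ℝ) := by
              apply integral_congr_ae
              exact Eventually.of_forall (fun t => hz t)
          _ = 0 := by simp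
      have h2 : Tendsto (fun n : ℕ => ∫ x in Set.Ioo (0:ℝ) 1,
          ξ x * Stmt9Aux.clampf (-((n:ℝ)+1)) ((n:ℝ)+1) g x) atTop (nhds 0) := by
        rw [show (fun n : ℕ => ∫ x in Set.Ioo (0:ℝ) 1,
          ξ x * Stmt9Aux.clampf (-((n:ℝ)+1)) ((n:ℝ)+1) g x) = fun _ => (0:ℝ) from
          funext keyg]
        exact tendsto_const_nhds
      exact tendsto_nhds_unique (hlim g hgmem) h2
    have hsplit : (∫ w in Set.Ioo (0:ℝ) 1, ξ w * (z w - g w)) =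
        (∫ x in Set.Ioo (0:ℝ) 1, ξ x * z x) - ∫ x in Set.Ioo (0:ℝ) 1, ξ x * g x := by
      have hs := integral_sub (μ := volume.restrict (Set.Ioo (0:ℝ) 1))
        (f := fun x => ξ x * z x) (g := fun x => ξ x * g x)
        (by exact Stmt9Aux.integrable_mul2 hξ hzmem)
        (by exact Stmt9Aux.integrable_mul2 hξ hgmem)
      beta_reduce at hs
      rw [← hs]
      apply integral_congr_ae
      apply Eventually.of_forall
      intro x
      ring
    rw [hsplit, hgeq, sub_zero]
    exact hzle
end
end
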